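/- arXiv:2106.10441 — 12 statements merged into one kernel-verified Lean document; each statement's English description precedes it below -/
import Mathlib

section
/- Let R be a commutative ring, S a multiplicative subset of R, and f : M → N a u-S-isomorphism of R-modules. Then there exists an R-homomorphism g : N → M and an element t ∈ S such that f ∘ g = t·Id_N and g ∘ f = t·Id_M (in particular g is also a u-S-isomorphism). -/
universe u

/-- a `u`-`S`-isomorphism `f : M → N` admits a "quasi-inverse" `g` with
`f ∘ g = t • id` and `g ∘ f = t • id` for some `t ∈ S`. -/
theorem uS_isomorphism_has_quasi_inverse
    {R : Type u} [CommRing R] (S : Submonoid R)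
    {M N : Type u} [AddCommGroup M] [Module R M] [AddCommGroup N] [Module R N]
    (f : M →ₗ[R] N)
    (hker : ∃ s ∈ S, ∀ x ∈ LinearMap.ker f, s • x = 0)
    (hcoker : ∃ s ∈ S, ∀ y : N, s • y ∈ LinearMap.range f) :
    ∃ (g : N →ₗ[R] M), ∃ t ∈ S,
      (∀ y : N, f (g y) = t • y) ∧ (∀ x : M, g (f x) = t • x) ∧
      (∃ s ∈ S, ∀ y ∈ LinearMap.ker g, s • y = 0) ∧
      (∃ s ∈ S, ∀ x : M, s • x ∈ LinearMap.range g) := by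
  obtain ⟨s₁, hs₁S, hs₁⟩ := hker
  obtain ⟨s₂, hs₂S, hs₂⟩ := hcoker
  have key : ∀ a b : M, f a = f b → s₁ • a = s₁ • b := by
    intro a b h
    have hm : a - b ∈ LinearMap.ker f := by
      simp [LinearMap.mem_ker, h]
    have := hs₁ _ hm
    rwa [smul_sub, sub_eq_zero] at this
  choose σ hσ using hs₂
  let g : N →ₗ[R] M :=
    { toFun := fun y => s₁ • σ y
      map_add' := fun y y' => by
        have h : f (σ (y + y')) = f (σ y + σ y') := by
          rw [hσ, map_add, hσ, hσ, smul_add]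
        show s₁ • σ (y + y') = s₁ • σ y + s₁ • σ y'
        rw [key _ _ h, smul_add]
      map_smul' := fun r y => by
        have h : f (σ (r • y)) = f (r • σ y) := by
          rw [hσ, map_smul, hσ, smul_comm]
        show s₁ • σ (r • y) = r • (s₁ • σ y)
        rw [key _ _ h, smul_comm] }
  have hfg : ∀ y : N, f (g y) = (s₁ * s₂) • y := by
    intro y
    show f (s₁ • σ y) = _
    rw [map_smul, hσ, mul_smul]
  have hgf : ∀ x : M, g (f x) = (s₁ * s₂) • x := by
    intro x
    show s₁ • σ (f x) = _
    have h : f (σ (f x)) = f (s₂ • x) := by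
      rw [hσ, map_smul]
    rw [key _ _ h, ← mul_smul]
  refine ⟨g, s₁ * s₂, S.mul_mem hs₁S hs₂S, hfg, hgf, ⟨s₁ * s₂, S.mul_mem hs₁S hs₂S, ?_⟩,
    ⟨s₁ * s₂, S.mul_mem hs₁S hs₂S, ?_⟩⟩
  · intro y hy
    rw [LinearMap.mem_ker] at hy
    rw [← hfg y, hy, map_zero]
  · intro x
    exact ⟨f x, hgf x⟩
end

section
/- Let R be a commutative ring, S a multiplicative subset. A u-S-short exact sequence 0 → A →f B →g C → 0 is u-S-split (there exist s ∈ S and f' : B → A with f' ∘ f = s·Id_A) if and only if there exist s' ∈ S and g' : C → B with g ∘ g' = s'·Id_C. -/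
universe u

/-- `0 → A →f B →g C → 0` is a `u`-`S`-short exact sequence. -/
def IsUSShortExact {R : Type u} [CommRing R] (S : Submonoid R)
    {A B C : Type u} [AddCommGroup A] [Module R A] [AddCommGroup B] [Module R B]
    [AddCommGroup C] [Module R C] (f : A →ₗ[R] B) (g : B →ₗ[R] C) : Prop :=
  (∃ s ∈ S, ∀ x ∈ LinearMap.ker f, s • x = 0) ∧
  (∃ s ∈ S, (∀ x ∈ LinearMap.ker g, s • x ∈ LinearMap.range f) ∧
            (∀ x ∈ LinearMap.range f, s • x ∈ LinearMap.ker g)) ∧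
  (∃ s ∈ S, ∀ y : C, s • y ∈ LinearMap.range g)

/-- a `u`-`S`-short exact sequence is `u`-`S`-split (retraction up to `s ∈ S`)
iff it admits a section up to some `s' ∈ S`. -/
theorem uS_split_iff_section
    {R : Type u} [CommRing R] (S : Submonoid R)
    {A B C : Type u} [AddCommGroup A] [Module R A] [AddCommGroup B] [Module R B]
    [AddCommGroup C] [Module R C] (f : A →ₗ[R] B) (g : B →ₗ[R] C)
    (h : IsUSShortExact S f g) :
    (∃ s ∈ S, ∃ f' : B →ₗ[R] A, ∀ a : A, f' (f a) = s • a) ↔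
    (∃ s' ∈ S, ∃ g' : C →ₗ[R] B, ∀ c : C, g (g' c) = s' • c) := by
  obtain ⟨⟨s₀, hs₀S, hinj⟩, ⟨s₁, hs₁S, hker, himg⟩, ⟨s₂, hs₂S, hsurj⟩⟩ := h
  constructor
  · rintro ⟨s, hsS, f', hf'⟩
    -- ψ : B → B, ψ b = s₁ • (s • b - f (f' b)), kills ker g
    set ψ : B →ₗ[R] B := s₁ • (s • LinearMap.id - f ∘ₗ f') with hψ
    have hψker : LinearMap.ker g ≤ LinearMap.ker ψ := by
      intro b hb
      obtain ⟨a, ha⟩ := hker b hb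
      have : ψ b = s • (s₁ • b) - f (f' (s₁ • b)) := by
        simp [hψ, smul_sub, smul_comm s₁ s]
      rw [LinearMap.mem_ker, this, ← ha, hf', map_smul, sub_self]
    set ψ' : (B ⧸ LinearMap.ker g) →ₗ[R] B := (LinearMap.ker g).liftQ ψ hψker with hψ'
    set σ : C →ₗ[R] LinearMap.range g :=
      LinearMap.codRestrict (LinearMap.range g) (s₂ • LinearMap.id) hsurj with hσ
    refine ⟨s * s₁ * s₂, mul_mem (mul_mem hsS hs₁S) hs₂S,
      ψ' ∘ₗ (g.quotKerEquivRange.symm : LinearMap.range g →ₗ[R] _) ∘ₗ σ, fun c => ?_⟩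
    obtain ⟨b, hb⟩ := hsurj c
    have hσc : σ c = ⟨g b, LinearMap.mem_range_self g b⟩ := by
      apply Subtype.ext; simp [hσ, hb]
    have hgf : ∀ x : A, g (s₁ • f x) = 0 := fun x =>
      himg (f x) (LinearMap.mem_range_self f x)
    rw [LinearMap.comp_apply, LinearMap.comp_apply, hσc, LinearEquiv.coe_coe,
      g.quotKerEquivRange_symm_apply_image b]
    have hmk : ψ' ((LinearMap.ker g).mkQ b) = ψ b := rfl
    rw [hmk]
    have : g (ψ b) = s • (s₁ • g b) - g (s₁ • f (f' b)) := by
      simp [hψ, smul_sub, smul_comm s₁ s]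
    rw [this, hgf, sub_zero, hb, mul_smul, mul_smul]
  · rintro ⟨s', hs'S, g', hg'⟩
    -- φ : B → B, φ b = s₁ • (s' • b - g' (g b)), lands in range f
    set φ : B →ₗ[R] B := s₁ • (s' • LinearMap.id - g' ∘ₗ g) with hφ
    have hφrange : ∀ b : B, φ b ∈ LinearMap.range f := by
      intro b
      have hkg : s' • b - g' (g b) ∈ LinearMap.ker g := by
        rw [LinearMap.mem_ker, map_sub, map_smul, hg', sub_self]
      have := hker _ hkg
      simpa [hφ] using this
    set τ : B →ₗ[R] LinearMap.range f :=
      LinearMap.codRestrict (LinearMap.range f) φ hφrange with hτ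
    -- ρ : A ⧸ ker f → A induced by s₀ • id
    have hs₀ker : LinearMap.ker f ≤ LinearMap.ker (s₀ • (LinearMap.id : A →ₗ[R] A)) := by
      intro a ha
      simpa using hinj a ha
    set ρ : (A ⧸ LinearMap.ker f) →ₗ[R] A :=
      (LinearMap.ker f).liftQ (s₀ • LinearMap.id) hs₀ker with hρ
    refine ⟨s₀ * s' * s₁, mul_mem (mul_mem hs₀S hs'S) hs₁S,
      ρ ∘ₗ (f.quotKerEquivRange.symm : LinearMap.range f →ₗ[R] _) ∘ₗ τ, fun a => ?_⟩
    have h1 : s₁ • g (f a) = 0 := by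
      have := himg (f a) (LinearMap.mem_range_self f a)
      rw [LinearMap.mem_ker, map_smul] at this
      exact this
    have h2 : s₁ • g' (g (f a)) = 0 := by
      rw [← map_smul g', h1, map_zero]
    have hτfa : τ (f a) = ⟨f ((s' * s₁) • a), LinearMap.mem_range_self f _⟩ := by
      apply Subtype.ext
      have hval : φ (f a) = s' • (s₁ • f a) - s₁ • g' (g (f a)) := by
        simp [hφ, smul_sub, smul_comm s₁ s']
      have : (τ (f a) : B) = φ (f a) := rfl
      rw [this, hval, h2, sub_zero]
      show s' • s₁ • f a = f ((s' * s₁) • a)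
      rw [map_smul, mul_smul]
    rw [LinearMap.comp_apply, LinearMap.comp_apply, hτfa, LinearEquiv.coe_coe,
      f.quotKerEquivRange_symm_apply_image ((s' * s₁) • a)]
    have hmk : ρ ((LinearMap.ker f).mkQ ((s' * s₁) • a)) = s₀ • ((s' * s₁) • a) := rfl
    rw [hmk, ← mul_smul, ← mul_assoc]
end

section
/- Let R be a commutative ring, S a multiplicative subset, and E an R-module. Then E is u-S-injective if and only if for every injective R-homomorphism f : A → B and every R-homomorphism h : A → E, there exist an R-homomorphism g : B → E and s ∈ S such that s·h = g ∘ f. -/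
open CategoryTheory

universe u

def IsUSTorsionMod {R : Type u} [CommRing R] (S : Submonoid R) (X : ModuleCat.{u} R) : Prop :=
  ∃ s ∈ S, ∀ x : X, s • x = 0

def IsUSTorsion {R : Type u} [CommRing R] (S : Submonoid R) (T : Type u)
    [AddCommGroup T] [Module R T] : Prop :=
  ∃ s ∈ S, ∀ x : T, s • x = 0

noncomputable def ext (R : Type u) [CommRing R] (n : ℕ) (P M : ModuleCat.{u} R) :
    ModuleCat.{u} R :=
  ((Ext R (ModuleCat.{u} R) n).obj (Opposite.op P)).obj M

def IsUSProjective {R : Type u} [CommRing R] (S : Submonoid R) (P : Type u)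
    [AddCommGroup P] [Module R P] : Prop :=
  ∀ M : ModuleCat.{u} R, IsUSTorsionMod S (ext R 1 (ModuleCat.of R P) M)

def IsUSInjective {R : Type u} [CommRing R] (S : Submonoid R) (E : Type u)
    [AddCommGroup E] [Module R E] : Prop :=
  ∀ M : ModuleCat.{u} R, IsUSTorsionMod S (ext R 1 M (ModuleCat.of R E))

section Aux

variable {R : Type u} [CommRing R] (S : Submonoid R)

lemma torsion_of_iso {X Y : ModuleCat.{u} R} (e : X ≅ Y) (hY : IsUSTorsionMod S Y) :
    IsUSTorsionMod S X := by
  obtain ⟨s, hs, hy⟩ := hY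
  refine ⟨s, hs, fun x => ?_⟩
  have h1 : e.hom.hom (s • x) = 0 := by
    rw [map_smul]; exact hy _
  calc s • x = e.inv (e.hom (s • x)) := (e.hom_inv_id_apply (s • x)).symm
    _ = e.inv 0 := by rw [h1]
    _ = 0 := map_zero _

variable (E : Type u) [AddCommGroup E] [Module R E]

/-- From the (pointwise) lifting property we get a uniform `s` for each fixed injection. -/
lemma uniform_lift
    (H : ∀ (A B : Type u) [AddCommGroup A] [Module R A] [AddCommGroup B] [Module R B]
        (f : A →ₗ[R] B), Function.Injective f →
        ∀ h : A →ₗ[R] E, ∃ (g : B →ₗ[R] E), ∃ s ∈ S, ∀ a : A, s • h a = g (f a))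
    (A B : Type u) [AddCommGroup A] [Module R A] [AddCommGroup B] [Module R B]
    (f : A →ₗ[R] B) (hf : Function.Injective f) :
    ∃ s ∈ S, ∀ h : A →ₗ[R] E, ∃ g : B →ₗ[R] E, ∀ a : A, s • h a = g (f a) := by
  classical
  set ι := (A →ₗ[R] E)
  have hf' : Function.Injective (Finsupp.mapRange.linearMap (α := ι) f) := by
    intro x y hxy
    ext i
    apply hf
    have := congrFun (congrArg (fun (z : ι →₀ B) => (z : ι → B)) hxy) i
    simpa using this
  obtain ⟨G, s, hs, hG⟩ := H (ι →₀ A) (ι →₀ B) (Finsupp.mapRange.linearMap f) hf'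
    (Finsupp.lsum R (fun h : ι => h))
  refine ⟨s, hs, fun h => ⟨G.comp (Finsupp.lsingle h), fun a => ?_⟩⟩
  have := hG (Finsupp.single h a)
  simpa using this

/-- Explicit description of `u`-`S`-torsionness of `Ext¹(M, E)` in terms of a projective
resolution of `M`. -/
lemma ext_torsion_iff (M : ModuleCat.{u} R) (P : ProjectiveResolution M) :
    IsUSTorsionMod S (ext R 1 M (ModuleCat.of R E)) ↔
      ∃ s ∈ S, ∀ h : P.complex.X 1 ⟶ ModuleCat.of R E,
        P.complex.d 2 1 ≫ h = 0 →
          ∃ φ : P.complex.X 0 ⟶ ModuleCat.of R E, P.complex.d 1 0 ≫ φ = s • h := by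
  set K := P.complex.linearYonedaObj R (ModuleCat.of R E) with hK
  set S' := K.sc' 0 1 2 with hS'
  have e : ext R 1 M (ModuleCat.of R E) ≅ S'.moduleCatLeftHomologyData.H :=
    P.isoExt 1 (ModuleCat.of R E) ≪≫
      ShortComplex.homologyMapIso (K.isoSc' 0 1 2 (by simp) (by simp)) ≪≫
      S'.moduleCatHomologyIso
  have hg : ∀ h : P.complex.X 1 ⟶ ModuleCat.of R E,
      S'.g h = P.complex.d 2 1 ≫ h := fun h => rfl
  have hf : ∀ φ : P.complex.X 0 ⟶ ModuleCat.of R E,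
      S'.f φ = P.complex.d 1 0 ≫ φ := fun φ => rfl
  constructor
  · rintro ⟨s, hs, tor⟩
    refine ⟨s, hs, fun h hcond => ?_⟩
    have hmem0 : S'.g.hom h = 0 := (hg h).trans hcond
    have hmem : h ∈ LinearMap.ker S'.g.hom := hmem0
    let q : S'.moduleCatLeftHomologyData.H := Submodule.Quotient.mk (⟨h, hmem⟩ : LinearMap.ker S'.g.hom)
    have h1 : s • (e.inv q) = 0 := tor (e.inv q)
    have h0 : s • q = 0 := by
      calc s • q = e.hom (e.inv (s • q)) := (e.inv_hom_id_apply _).symm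
        _ = e.hom (s • (e.inv q)) := by rw [map_smul]
        _ = e.hom 0 := by rw [h1]
        _ = 0 := map_zero _
    change s • (Submodule.Quotient.mk _ : LinearMap.ker S'.g.hom ⧸ LinearMap.range S'.moduleCatToCycles) = 0 at h0
    rw [← Submodule.Quotient.mk_smul, Submodule.Quotient.mk_eq_zero] at h0
    obtain ⟨φ, hφ⟩ := h0
    refine ⟨φ, ?_⟩
    have hv := congrArg Subtype.val hφ
    simp only [LinearMap.codRestrict_apply, SetLike.val_smul] at hv
    exact (hf φ).symm.trans hv
  · rintro ⟨s, hs, key⟩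
    refine torsion_of_iso S e ⟨s, hs, fun x => ?_⟩
    obtain ⟨⟨h, hmem⟩, rfl⟩ := Submodule.Quotient.mk_surjective _ x
    have hcond : P.complex.d 2 1 ≫ h = 0 := by
      rw [← hg h]; exact hmem
    obtain ⟨φ, hφ⟩ := key h hcond
    change s • (Submodule.Quotient.mk _ : LinearMap.ker S'.g.hom ⧸ LinearMap.range S'.moduleCatToCycles) = 0
    rw [← Submodule.Quotient.mk_smul, Submodule.Quotient.mk_eq_zero]
    refine ⟨φ, Subtype.ext ?_⟩
    simp only [LinearMap.codRestrict_apply, SetLike.val_smul]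
    exact (hf φ).trans hφ

end Aux

/-- `E` is `u`-`S`-injective iff maps into `E` extend along injections
up to multiplication by some `s ∈ S`. -/
theorem uS_injective_iff_lifting
    {R : Type u} [CommRing R] (S : Submonoid R)
    (E : Type u) [AddCommGroup E] [Module R E] :
    IsUSInjective S E ↔
      ∀ (A B : Type u) [AddCommGroup A] [Module R A] [AddCommGroup B] [Module R B]
        (f : A →ₗ[R] B), Function.Injective f →
        ∀ h : A →ₗ[R] E, ∃ (g : B →ₗ[R] E), ∃ s ∈ S, ∀ a : A, s • h a = g (f a) := by
  constructor
  · intro hinj A B _ _ _ _ f hf h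
    set M : ModuleCat.{u} R := ModuleCat.of R (B ⧸ LinearMap.range f) with hM
    set P : ProjectiveResolution M := ProjectiveResolution.of M with hP
    obtain ⟨s, hs, key⟩ := (ext_torsion_iff S E M P).1 (hinj M)
    set π0 : ModuleCat.of R B ⟶ M := ModuleCat.ofHom (LinearMap.range f).mkQ with hπ0
    have : Epi π0 := by
      rw [ModuleCat.epi_iff_surjective]
      exact Submodule.mkQ_surjective _
    set ε : P.complex.X 0 ⟶ M := P.π.f 0 with hε
    set β : P.complex.X 0 ⟶ ModuleCat.of R B := Projective.factorThru ε π0 with hβdef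
    have hβ : β ≫ π0 = ε := Projective.factorThru_comp _ _
    have hd10ε : P.complex.d 1 0 ≫ ε = 0 := P.complex_d_comp_π_f_zero
    set βl : (P.complex.X 0 : Type u) →ₗ[R] B := β.hom with hβl
    set d10 : (P.complex.X 1 : Type u) →ₗ[R] P.complex.X 0 := (P.complex.d 1 0).hom with hd10l
    have hπβ : ∀ x : P.complex.X 0, π0 (βl x) = ε x := fun x => ConcreteCategory.congr_hom hβ x
    have hεd : ∀ y : P.complex.X 1, ε (d10 y) = 0 := fun y => ConcreteCategory.congr_hom hd10ε y
    have hmemr : ∀ y : P.complex.X 1, βl (d10 y) ∈ LinearMap.range f := by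
      intro y
      have h1 : (LinearMap.range f).mkQ (βl (d10 y)) = 0 := (hπβ (d10 y)).trans (hεd y)
      rwa [← LinearMap.mem_ker, Submodule.ker_mkQ] at h1
    set eA : A ≃ₗ[R] LinearMap.range f := LinearEquiv.ofInjective f hf with heA
    set α : (P.complex.X 1 : Type u) →ₗ[R] A :=
      eA.symm.toLinearMap.comp ((βl.comp d10).codRestrict (LinearMap.range f) hmemr) with hα
    have hfα : ∀ y : P.complex.X 1, f (α y) = βl (d10 y) := by
      intro y
      have : (eA (α y) : B) = βl (d10 y) := by
        simp only [hα, LinearMap.comp_apply, LinearEquiv.coe_coe,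
          LinearEquiv.apply_symm_apply, LinearMap.codRestrict_apply]
      rwa [heA] at this
    set h₁ : P.complex.X 1 ⟶ ModuleCat.of R E := ModuleCat.ofHom ((h : A →ₗ[R] E).comp α)
      with hh₁
    set d21 : (P.complex.X 2 : Type u) →ₗ[R] P.complex.X 1 := (P.complex.d 2 1).hom with hd21l
    have hcond : P.complex.d 2 1 ≫ h₁ = 0 := by
      apply ModuleCat.hom_ext
      apply LinearMap.ext
      intro z
      have hdz : d10 (d21 z) = 0 := ConcreteCategory.congr_hom (P.complex.d_comp_d 2 1 0) z
      have hz : f (α (d21 z)) = f 0 := by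
        rw [map_zero, hfα, hdz, map_zero]
      have hz0 := hf hz
      show h (α (d21 z)) = 0
      rw [hz0, map_zero]
    obtain ⟨φ, hφ⟩ := key h₁ hcond
    set φl : (P.complex.X 0 : Type u) →ₗ[R] E := φ.hom with hφl
    have hφ' : ∀ y : P.complex.X 1, φl (d10 y) = s • h (α y) := fun y =>
      ConcreteCategory.congr_hom hφ y
    set Φ : (A × (P.complex.X 0 : Type u)) →ₗ[R] B := f.coprod βl with hΦ
    set Ψ : (A × (P.complex.X 0 : Type u)) →ₗ[R] E := (s • (h : A →ₗ[R] E)).coprod φl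
      with hΨ
    have hεsurj : Function.Surjective ε.hom := by
      rw [← ModuleCat.epi_iff_surjective]
      exact (inferInstance : Epi (P.π.f 0))
    have hΦsurj : Function.Surjective Φ := by
      intro b
      obtain ⟨x, hx⟩ := hεsurj ((LinearMap.range f).mkQ b)
      have hmem2 : b - βl x ∈ LinearMap.range f := by
        rw [← Submodule.ker_mkQ (LinearMap.range f), LinearMap.mem_ker, map_sub]
        rw [show (LinearMap.range f).mkQ (βl x) = ε x from hπβ x, hx, sub_self]
      obtain ⟨a, ha⟩ := hmem2
      refine ⟨(a, x), ?_⟩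
      show f a + βl x = b
      rw [ha, sub_add_cancel]
    have hrk : LinearMap.range d10 = LinearMap.ker ε.hom :=
      (P.exact₀).moduleCat_range_eq_ker
    have hkerle : LinearMap.ker Φ ≤ LinearMap.ker Ψ := by
      rintro ⟨a, x⟩ hax
      have hax' : f a + βl x = 0 := hax
      have hb : βl x = - f a := eq_neg_of_add_eq_zero_right hax'
      have hεx : ε x = 0 := by
        rw [← hπβ x, hb, map_neg]
        have hfa0 : π0 (f a) = 0 := by
          show (LinearMap.range f).mkQ (f a) = 0
          rw [← LinearMap.mem_ker, Submodule.ker_mkQ]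
          exact ⟨a, rfl⟩
        rw [hfa0, neg_zero]
      have hxr : x ∈ LinearMap.range d10 := by rw [hrk]; exact hεx
      obtain ⟨y, hy⟩ := hxr
      have hαy : α y = -a := by
        apply hf
        rw [hfα, hy, hb, map_neg]
      show Ψ (a, x) = 0
      have hΨax : Ψ (a, x) = s • h a + φl x := rfl
      rw [hΨax, ← hy, hφ' y, hαy, map_neg, smul_neg, add_neg_cancel]
    set g : B →ₗ[R] E :=
      ((LinearMap.ker Φ).liftQ Ψ hkerle).comp
        (Φ.quotKerEquivOfSurjective hΦsurj).symm.toLinearMap with hgdef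
    have hgΦ : ∀ p, g (Φ p) = Ψ p := by
      intro p
      have h1 : (Φ.quotKerEquivOfSurjective hΦsurj).symm (Φ p) = Submodule.Quotient.mk p := by
        apply (Φ.quotKerEquivOfSurjective hΦsurj).injective
        rw [LinearEquiv.apply_symm_apply]
        show Φ p = Φ.quotKerEquivOfSurjective hΦsurj (Submodule.Quotient.mk p)
        rw [LinearMap.quotKerEquivOfSurjective, LinearEquiv.trans_apply,
          LinearEquiv.ofTop_apply, LinearMap.quotKerEquivRange_apply_mk]
      simp only [hgdef, LinearMap.coe_comp, Function.comp_apply, LinearEquiv.coe_coe, h1,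
        Submodule.liftQ_apply]
    refine ⟨g, s, hs, fun a => ?_⟩
    have := hgΦ (a, 0)
    simpa [hΦ, hΨ, LinearMap.coprod_apply] using this.symm
  · intro hl M
    set P : ProjectiveResolution M := ProjectiveResolution.of M with hP
    rw [ext_torsion_iff S E M P]
    set d10 : (P.complex.X 1 : Type u) →ₗ[R] P.complex.X 0 :=
      (P.complex.d 1 0 : P.complex.X 1 ⟶ P.complex.X 0).hom with hd10
    obtain ⟨s, hs, ul⟩ := uniform_lift S E hl (LinearMap.range d10) (P.complex.X 0)
      (Submodule.subtype _) (Submodule.injective_subtype _)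
    refine ⟨s, hs, fun h hcond => ?_⟩
    have hrk : LinearMap.range (P.complex.d 2 1 : P.complex.X 2 ⟶ P.complex.X 1).hom =
        LinearMap.ker d10 := (P.exact_succ 0).moduleCat_range_eq_ker
    have hker : LinearMap.ker d10 ≤ LinearMap.ker h.hom := by
      intro x hx
      rw [← hrk] at hx
      obtain ⟨z, rfl⟩ := hx
      have := congrArg (fun (ψ : P.complex.X 2 ⟶ ModuleCat.of R E) =>
        ψ.hom z) hcond
      simpa using this
    set h' : LinearMap.range d10 →ₗ[R] E :=
      ((LinearMap.ker d10).liftQ h.hom hker).comp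
        (d10.quotKerEquivRange).symm.toLinearMap with hh'
    have hfact : ∀ y : P.complex.X 1, h' ⟨d10 y, LinearMap.mem_range_self _ y⟩ =
        h.hom y := by
      intro y
      have h1 : d10.quotKerEquivRange.symm ⟨d10 y, LinearMap.mem_range_self _ y⟩ =
          Submodule.Quotient.mk y := by
        apply d10.quotKerEquivRange.injective
        rw [LinearEquiv.apply_symm_apply]
        exact Subtype.ext (d10.quotKerEquivRange_apply_mk y).symm
      show ((LinearMap.ker d10).liftQ h.hom hker)
          (d10.quotKerEquivRange.symm ⟨d10 y, LinearMap.mem_range_self _ y⟩) = h y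
      rw [h1, Submodule.liftQ_apply]
    obtain ⟨g, hg⟩ := ul h'
    refine ⟨ModuleCat.ofHom g, ?_⟩
    apply ModuleCat.hom_ext
    apply LinearMap.ext
    intro y
    have := hg ⟨d10 y, LinearMap.mem_range_self _ y⟩
    rw [hfact y] at this
    simpa using this.symm
end

section
/- Let R be a commutative ring, S a multiplicative subset, and E an R-module. Then E is u-S-injective if and only if every short exact sequence 0 → E → B → C → 0 beginning at E is u-S-split. -/
open CategoryTheory

universe u

section USAux

variable {R : Type u} [CommRing R]

/-- The concrete description of `Ext¹` via a chosen projective resolution, as the homology of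
the short complex `Hom(P₀, Y) ⟶ Hom(P₁, Y) ⟶ Hom(P₂, Y)` in the `ModuleCat` homology API. -/
noncomputable def uSExtHomologyIso (X Y : ModuleCat.{u} R) (P : ProjectiveResolution X) :
    ext R 1 X Y ≅ ModuleCat.of R (LinearMap.ker ((P.complex.linearYonedaObj R Y).sc' 0 1 2).g.hom ⧸
      LinearMap.range ((P.complex.linearYonedaObj R Y).sc' 0 1 2).moduleCatToCycles) :=
  P.isoExt 1 Y ≪≫
    ShortComplex.homologyMapIso
      ((P.complex.linearYonedaObj R Y).isoSc' 0 1 2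
        ((ComplexShape.up ℕ).prev_eq' (by simp)) ((ComplexShape.up ℕ).next_eq' (by simp))) ≪≫
    ((P.complex.linearYonedaObj R Y).sc' 0 1 2).moduleCatHomologyIso

lemma uSsc_g_apply (X Y : ModuleCat.{u} R) (P : ProjectiveResolution X)
    (μ : P.complex.X 1 ⟶ Y) :
    ((P.complex.linearYonedaObj R Y).sc' 0 1 2).g μ = P.complex.d 2 1 ≫ μ := by
  simp [ChainComplex.linearYonedaObj_d]
  rfl

lemma uSsc_f_apply (X Y : ModuleCat.{u} R) (P : ProjectiveResolution X)
    (ν : P.complex.X 0 ⟶ Y) :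
    ((P.complex.linearYonedaObj R Y).sc' 0 1 2).f ν = P.complex.d 1 0 ≫ ν := by
  simp [ChainComplex.linearYonedaObj_d]
  rfl

/-- If `Ext¹(X, Y)` is killed by `s`, then any `1`-cocycle becomes a coboundary after
multiplication by `s`. -/
lemma uS_extension_of_torsion {X Y : ModuleCat.{u} R} (P : ProjectiveResolution X) {s : R}
    (hs : ∀ z : (ext R 1 X Y), s • z = 0)
    (μ : P.complex.X 1 ⟶ Y) (hμ : P.complex.d 2 1 ≫ μ = 0) :
    ∃ ν : P.complex.X 0 ⟶ Y, P.complex.d 1 0 ≫ ν = s • μ := by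
  set Ssc := (P.complex.linearYonedaObj R Y).sc' 0 1 2 with hSsc
  have hg : Ssc.g μ = 0 := by rw [uSsc_g_apply]; exact hμ
  set m : LinearMap.ker Ssc.g.hom := ⟨μ, hg⟩ with hm
  set e := uSExtHomologyIso X Y P with he
  have key : s • ((LinearMap.range Ssc.moduleCatToCycles).mkQ m) = 0 := by
    have h1 : (LinearMap.range Ssc.moduleCatToCycles).mkQ m = e.hom (e.inv ((LinearMap.range Ssc.moduleCatToCycles).mkQ m)) :=
      (Iso.inv_hom_id_apply e _).symm
    rw [h1, ← map_smul, hs, map_zero]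
  have hmem : s • m ∈ LinearMap.range Ssc.moduleCatToCycles := by
    rw [← Submodule.Quotient.mk_eq_zero, Submodule.Quotient.mk_smul]
    exact key
  obtain ⟨ν, hν⟩ := hmem
  refine ⟨ν, ?_⟩
  have h2 := congrArg Subtype.val hν
  rw [← uSsc_f_apply X Y P ν]
  exact h2

/-- Conversely, if multiplying by `s` turns every `1`-cocycle into a coboundary, then `s`
kills `Ext¹(X, Y)`. -/
lemma uS_torsion_of_extension {X Y : ModuleCat.{u} R} (P : ProjectiveResolution X) {s : R}
    (h : ∀ μ : P.complex.X 1 ⟶ Y, P.complex.d 2 1 ≫ μ = 0 →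
        ∃ ν : P.complex.X 0 ⟶ Y, P.complex.d 1 0 ≫ ν = s • μ) :
    ∀ z : (ext R 1 X Y), s • z = 0 := by
  intro z
  set Ssc := (P.complex.linearYonedaObj R Y).sc' 0 1 2 with hSsc
  set e := uSExtHomologyIso X Y P with he
  have key : s • e.hom z = 0 := by
    obtain ⟨⟨μ, hμ⟩, hmk⟩ := Submodule.Quotient.mk_surjective _ (e.hom z)
    rw [← hmk, ← Submodule.Quotient.mk_smul, Submodule.Quotient.mk_eq_zero]
    obtain ⟨ν, hν⟩ := h μ (by rw [← uSsc_g_apply X Y P μ]; exact hμ)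
    refine ⟨ν, ?_⟩
    apply Subtype.ext
    rw [← uSsc_f_apply X Y P ν] at hν
    exact hν
  have h0 : e.hom (s • z) = e.hom 0 := by rw [map_smul, map_zero, key]
  have hinj : Function.Injective e.hom :=
    (ModuleCat.mono_iff_injective e.hom).1 inferInstance
  exact hinj h0

/-- Forward direction: `u`-`S`-injectivity implies every short exact sequence beginning
at `E` is `u`-`S`-split. -/
lemma uS_forward (S : Submonoid R) (E : Type u) [AddCommGroup E] [Module R E]
    (hinj : IsUSInjective S E)
    (B C : Type u) [AddCommGroup B] [Module R B] [AddCommGroup C] [Module R C]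
    (f : E →ₗ[R] B) (g : B →ₗ[R] C)
    (hf : Function.Injective f) (hg : Function.Surjective g)
    (hfg : LinearMap.range f = LinearMap.ker g) :
    ∃ s ∈ S, ∃ f' : B →ₗ[R] E, ∀ e : E, f' (f e) = s • e := by
  classical
  set Cm : ModuleCat.{u} R := ModuleCat.of R C with hCm
  set Bm : ModuleCat.{u} R := ModuleCat.of R B with hBm
  obtain ⟨P⟩ := (HasProjectiveResolution.out (Z := Cm))
  obtain ⟨s, hsS, hs⟩ := hinj Cm
  set gB : Bm ⟶ Cm := ModuleCat.ofHom g with hgB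
  haveI : Epi gB := (ModuleCat.epi_iff_surjective gB).2 hg
  set lam : P.complex.X 0 ⟶ Bm := Projective.factorThru (X := Cm) (P.π.f 0) gB with hlamdef
  have hlam : lam ≫ gB = P.π.f 0 := Projective.factorThru_comp _ _
  set d1 : ↥(P.complex.X 1) →ₗ[R] ↥(P.complex.X 0) := (P.complex.d 1 0).hom with hd1
  set d2 : ↥(P.complex.X 2) →ₗ[R] ↥(P.complex.X 1) := (P.complex.d 2 1).hom with hd2
  set π0 : ↥(P.complex.X 0) →ₗ[R] C := show ↥(P.complex.X 0) →ₗ[R] C from (P.π.f 0).hom with hπ0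
  set laml : ↥(P.complex.X 0) →ₗ[R] B := show ↥(P.complex.X 0) →ₗ[R] B from lam.hom with hlaml
  have hlam' : ∀ x, g (laml x) = π0 x := fun x => LinearMap.congr_fun (ModuleCat.hom_ext_iff.mp hlam) x
  set μ0 : ↥(P.complex.X 1) →ₗ[R] B := laml ∘ₗ d1 with hμ0
  have hgμ0 : ∀ x, g (μ0 x) = 0 := by
    intro x
    have e2 : π0 (d1 x) = 0 := LinearMap.congr_fun (ModuleCat.hom_ext_iff.mp P.complex_d_comp_π_f_zero) x
    show g (laml (d1 x)) = 0
    rw [hlam', e2]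
  set eqv := LinearEquiv.ofInjective f hf with heqv
  set μ : ↥(P.complex.X 1) →ₗ[R] E :=
    (eqv.symm : _ →ₗ[R] _) ∘ₗ
      (LinearMap.codRestrict (LinearMap.range f) μ0
        (fun x => by rw [hfg]; exact LinearMap.mem_ker.2 (hgμ0 x))) with hμ
  have hfμ : ∀ x, f (μ x) = μ0 x := by
    intro x
    show f (eqv.symm _) = μ0 x
    rw [heqv, LinearEquiv.ofInjective_symm_apply]
    rfl
  set μc : P.complex.X 1 ⟶ ModuleCat.of R E := ModuleCat.ofHom μ with hμc
  have hcocycle : P.complex.d 2 1 ≫ μc = 0 := by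
    ext x
    apply hf
    show f (μ (d2 x)) = f 0
    rw [hfμ, map_zero, hμ0]
    have hdd : d1 (d2 x) = 0 := LinearMap.congr_fun (ModuleCat.hom_ext_iff.mp (P.complex.d_comp_d 2 1 0)) x
    show laml (d1 (d2 x)) = 0
    rw [hdd, map_zero]
  obtain ⟨ν, hν⟩ := uS_extension_of_torsion P hs μc hcocycle
  set νl : ↥(P.complex.X 0) →ₗ[R] E := show ↥(P.complex.X 0) →ₗ[R] E from ν.hom with hνl
  have hνx : ∀ x, νl (d1 x) = s • μ x := fun x => LinearMap.congr_fun (ModuleCat.hom_ext_iff.mp hν) x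
  set w : ↥(P.complex.X 0) →ₗ[R] B := s • laml - f ∘ₗ νl with hw
  have hexact0 : LinearMap.range d1 = LinearMap.ker π0 := by
    have := P.exact₀.moduleCat_range_eq_ker
    exact this
  haveI : Epi (P.π.f 0) := Limits.epi_of_isColimit_cofork P.isColimitCokernelCofork
  have hπ0surj : Function.Surjective π0 :=
    (ModuleCat.epi_iff_surjective (P.π.f 0)).1 inferInstance
  have hker : LinearMap.ker π0 ≤ LinearMap.ker w := by
    intro x hx
    rw [← hexact0] at hx
    obtain ⟨y, rfl⟩ := hx
    have hv : s • laml (d1 y) - f (νl (d1 y)) = 0 := by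
      rw [hνx, map_smul, hfμ, hμ0]
      show s • laml (d1 y) - s • laml (d1 y) = 0
      simp
    show s • laml (d1 y) - f (νl (d1 y)) = 0
    exact hv
  set q := π0.quotKerEquivOfSurjective hπ0surj with hq
  set hC : C →ₗ[R] B := (Submodule.liftQ (LinearMap.ker π0) w hker) ∘ₗ (q.symm : _ →ₗ[R] _)
    with hhC
  have hqmk : ∀ x, q (Submodule.Quotient.mk x) = π0 x := by
    intro x
    simp [hq, LinearMap.quotKerEquivOfSurjective, LinearMap.quotKerEquivRange_apply_mk]
  have hCπ : ∀ x, hC (π0 x) = w x := by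
    intro x
    have h1 : q.symm (π0 x) = Submodule.Quotient.mk x := by
      apply q.injective; rw [LinearEquiv.apply_symm_apply, hqmk]
    show Submodule.liftQ (LinearMap.ker π0) w hker (q.symm (π0 x)) = w x
    rw [h1, Submodule.liftQ_apply]
  have hghC : ∀ c : C, g (hC c) = s • c := by
    intro c
    obtain ⟨x, rfl⟩ := hπ0surj c
    rw [hCπ]
    show g (s • laml x - f (νl x)) = s • π0 x
    have h2 : g (f (νl x)) = 0 := by
      have hmem : f (νl x) ∈ LinearMap.ker g := by
        rw [← hfg]; exact LinearMap.mem_range_self f _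
      exact hmem
    rw [map_sub, map_smul, h2, hlam', sub_zero]
  have hmem : ∀ b : B, s • b - hC (g b) ∈ LinearMap.range f := by
    intro b
    rw [hfg]
    apply LinearMap.mem_ker.2
    rw [map_sub, map_smul, hghC, sub_self]
  set f' : B →ₗ[R] E :=
    (eqv.symm : _ →ₗ[R] _) ∘ₗ
      (LinearMap.codRestrict (LinearMap.range f) (s • LinearMap.id - hC ∘ₗ g) hmem) with hf'
  refine ⟨s, hsS, f', ?_⟩
  intro e
  have hge : g (f e) = 0 := by
    have hmem2 : f e ∈ LinearMap.ker g := by rw [← hfg]; exact LinearMap.mem_range_self f _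
    exact hmem2
  apply hf
  have hF : f (f' (f e)) = s • (f e) - hC (g (f e)) := by
    show f (eqv.symm _) = _
    rw [heqv, LinearEquiv.ofInjective_symm_apply]
    rfl
  rw [hF, hge, map_zero, sub_zero, map_smul]

/-- Backward direction: if every short exact sequence beginning at `E` is `u`-`S`-split,
then `E` is `u`-`S`-injective. -/
lemma uS_backward (S : Submonoid R) (E : Type u) [AddCommGroup E] [Module R E]
    (H : ∀ (B C : Type u) [AddCommGroup B] [Module R B] [AddCommGroup C] [Module R C]
        (f : E →ₗ[R] B) (g : B →ₗ[R] C),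
        Function.Injective f → Function.Surjective g →
        LinearMap.range f = LinearMap.ker g →
        ∃ s ∈ S, ∃ f' : B →ₗ[R] E, ∀ e : E, f' (f e) = s • e) :
    IsUSInjective S E := by
  classical
  set Em : ModuleCat.{u} R := ModuleCat.of R E with hEm
  let I : ModuleCat.{u} R := Injective.under Em
  let ι : Em ⟶ I := Injective.ι Em
  have hι : Function.Injective ι := (ModuleCat.mono_iff_injective ι).1 inferInstance
  set ιl : E →ₗ[R] ↥I := ι.hom with hιl
  obtain ⟨s, hsS, f', hf'⟩ :=
    H ↥I (↥I ⧸ LinearMap.range ιl) ιl (LinearMap.range ιl).mkQ hι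
      (Submodule.mkQ_surjective _) (Submodule.ker_mkQ _).symm
  intro M
  obtain ⟨P⟩ := (HasProjectiveResolution.out (Z := M))
  refine ⟨s, hsS, uS_torsion_of_extension P ?_⟩
  intro μ hμ
  have hexact : LinearMap.range (P.complex.d 2 1).hom = LinearMap.ker (P.complex.d 1 0).hom :=
    (P.exact_succ 0).moduleCat_range_eq_ker
  set μI : P.complex.X 1 ⟶ I := μ ≫ ι with hμI
  have hkill : LinearMap.ker (P.complex.d 1 0).hom ≤ LinearMap.ker μI.hom := by
    intro x hx
    rw [← hexact] at hx
    obtain ⟨y, rfl⟩ := hx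
    have hy : μ (P.complex.d 2 1 y) = 0 := by
      have := LinearMap.congr_fun (ModuleCat.hom_ext_iff.mp hμ) y
      simpa using this
    simp [LinearMap.mem_ker, hμI]
    erw [hy]
    simp
  set d1 : ↥(P.complex.X 1) →ₗ[R] ↥(P.complex.X 0) := (P.complex.d 1 0).hom with hd1
  set φ : ↥(LinearMap.range d1) →ₗ[R] ↥I :=
    (Submodule.liftQ (LinearMap.ker d1) μI.hom hkill) ∘ₗ
      (d1.quotKerEquivRange.symm : _ →ₗ[R] _) with hφ
  have hφ2 : ∀ x : ↥(P.complex.X 1), φ ⟨d1 x, LinearMap.mem_range_self d1 x⟩ = μI x := by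
    intro x
    have h1 : d1.quotKerEquivRange.symm ⟨d1 x, LinearMap.mem_range_self d1 x⟩ =
        Submodule.Quotient.mk x := by
      apply d1.quotKerEquivRange.injective
      simp only [LinearEquiv.apply_symm_apply]
      apply Subtype.ext
      rw [LinearMap.quotKerEquivRange_apply_mk]
    simp [hφ, h1]
  haveI : CategoryTheory.Injective (ModuleCat.of R ↥I) :=
    Injective.of_iso (Iso.refl I) inferInstance
  have hInj : Module.Injective R ↥I := Module.injective_module_of_injective_object R ↥I
  obtain ⟨ν0, hν0⟩ := hInj.out (LinearMap.range d1).subtype (Submodule.injective_subtype _) φ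
  refine ⟨ModuleCat.ofHom (f' ∘ₗ ν0), ?_⟩
  ext x
  have h3 : ν0 (d1 x) = μI x := by
    have := hν0 ⟨d1 x, LinearMap.mem_range_self d1 x⟩
    simpa [hφ2 x] using this
  show f' (ν0 (d1 x)) = s • μ x
  rw [h3]
  show f' (ιl (μ x)) = s • μ x
  rw [hf']

end USAux

/-- `E` is `u`-`S`-injective iff every short exact sequence
`0 → E → B → C → 0` beginning at `E` is `u`-`S`-split. -/
theorem uS_injective_iff_sequences_beginning_split
    {R : Type u} [CommRing R] (S : Submonoid R)
    (E : Type u) [AddCommGroup E] [Module R E] :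
    IsUSInjective S E ↔
      ∀ (B C : Type u) [AddCommGroup B] [Module R B] [AddCommGroup C] [Module R C]
        (f : E →ₗ[R] B) (g : B →ₗ[R] C),
        Function.Injective f → Function.Surjective g →
        LinearMap.range f = LinearMap.ker g →
        ∃ s ∈ S, ∃ f' : B →ₗ[R] E, ∀ e : E, f' (f e) = s • e := by
  constructor
  · intro hinj B C _ _ _ _ f g hf hg hfg
    exact uS_forward S E hinj B C f g hf hg hfg
  · intro H
    exact uS_backward S E H
end

section
/- Let R be a commutative ring, S a multiplicative subset, and P an R-module. Then Ext¹_R(P, M) is u-S-torsion for every R-module M if and only if for every surjective R-homomorphism g : B → C and every h : P → C, there exist α : P → B and s ∈ S with s·h = g ∘ α. -/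
open CategoryTheory

universe u

/-- u-S-torsionness is invariant under isomorphism of modules. -/
lemma isUSTorsionMod_iff_of_iso {R : Type u} [CommRing R] (S : Submonoid R)
    {X Y : ModuleCat.{u} R} (e : X ≅ Y) :
    IsUSTorsionMod S X ↔ IsUSTorsionMod S Y := by
  constructor
  · rintro ⟨s, hs, h⟩
    refine ⟨s, hs, fun y => ?_⟩
    have := congrArg e.toLinearEquiv (h (e.toLinearEquiv.symm y))
    rw [map_smul, LinearEquiv.apply_symm_apply, map_zero] at this
    exact this
  · rintro ⟨s, hs, h⟩
    refine ⟨s, hs, fun x => ?_⟩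
    have := congrArg e.toLinearEquiv.symm (h (e.toLinearEquiv x))
    rw [map_smul, LinearEquiv.symm_apply_apply, map_zero] at this
    exact this

/-- `Ext¹(P, M)` is u-S-torsion iff every 1-cocycle of the complex `Hom(F•, M)` becomes
a coboundary after multiplication by some `s ∈ S` (with `s` uniform in the cocycle). -/
lemma isUSTorsionMod_ext_one_iff {R : Type u} [CommRing R] (S : Submonoid R)
    (P : Type u) [AddCommGroup P] [Module R P]
    (Pres : ProjectiveResolution (ModuleCat.of R P)) (M : ModuleCat.{u} R) :
    IsUSTorsionMod S (ext R 1 (ModuleCat.of R P) M) ↔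
      ∃ s ∈ S, ∀ (q : Pres.complex.X 1 ⟶ M), Pres.complex.d 2 1 ≫ q = 0 →
        ∃ r : Pres.complex.X 0 ⟶ M, Pres.complex.d 1 0 ≫ r = s • q := by
  have e : (ext R 1 (ModuleCat.of R P) M) ≅
      ((Pres.complex.linearYonedaObj R M).sc' 0 1 2).moduleCatLeftHomologyData.H :=
    Pres.isoExt 1 M ≪≫
      ShortComplex.homologyMapIso
        ((Pres.complex.linearYonedaObj R M).isoSc' 0 1 2 (by simp) (by simp)) ≪≫
      ((Pres.complex.linearYonedaObj R M).sc' 0 1 2).moduleCatHomologyIso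
  have hg : ∀ q : Pres.complex.X 1 ⟶ M,
      ((Pres.complex.linearYonedaObj R M).sc' 0 1 2).g q = Pres.complex.d 2 1 ≫ q := by
    intro q; simp [HomologicalComplex.sc']; rfl
  have hf : ∀ r : Pres.complex.X 0 ⟶ M,
      ((Pres.complex.linearYonedaObj R M).sc' 0 1 2).f r = Pres.complex.d 1 0 ≫ r := by
    intro r; simp [HomologicalComplex.sc']; rfl
  rw [isUSTorsionMod_iff_of_iso S e]
  show (∃ s ∈ S, ∀ x : (LinearMap.ker ((Pres.complex.linearYonedaObj R M).sc' 0 1 2).g.hom ⧸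
    LinearMap.range ((Pres.complex.linearYonedaObj R M).sc' 0 1 2).moduleCatToCycles),
      s • x = 0) ↔ _
  constructor
  · rintro ⟨s, hs, h⟩
    refine ⟨s, hs, fun q hq => ?_⟩
    have hqker : q ∈ LinearMap.ker ((Pres.complex.linearYonedaObj R M).sc' 0 1 2).g.hom :=
      by exact (hg q).trans hq
    have h0 := h (Submodule.Quotient.mk ⟨q, hqker⟩)
    rw [← Submodule.Quotient.mk_smul, Submodule.Quotient.mk_eq_zero] at h0
    obtain ⟨r, hr⟩ := h0
    exact ⟨r, (hf r).symm.trans (congrArg Subtype.val hr)⟩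
  · rintro ⟨s, hs, h⟩
    refine ⟨s, hs, fun z => ?_⟩
    obtain ⟨⟨q, hq⟩, rfl⟩ := Submodule.Quotient.mk_surjective _ z
    rw [← Submodule.Quotient.mk_smul, Submodule.Quotient.mk_eq_zero]
    obtain ⟨r, hr⟩ := h q ((hg q).symm.trans (LinearMap.mem_ker.1 hq))
    exact ⟨r, Subtype.ext ((hf r).trans hr)⟩

/-- `Ext¹(P, M)` is `u`-`S`-torsion for all `M` iff maps from `P` lift
along surjections up to multiplication by some `s ∈ S`. -/
theorem uS_projective_iff_lifting
    {R : Type u} [CommRing R] (S : Submonoid R)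
    (P : Type u) [AddCommGroup P] [Module R P] :
    IsUSProjective S P ↔
      ∀ (B C : Type u) [AddCommGroup B] [Module R B] [AddCommGroup C] [Module R C]
        (g : B →ₗ[R] C), Function.Surjective g →
        ∀ h : P →ₗ[R] C, ∃ (α : P →ₗ[R] B), ∃ s ∈ S, ∀ x : P, s • h x = g (α x) := by
  classical
  obtain ⟨Pres⟩ : Nonempty (ProjectiveResolution (ModuleCat.of R P)) :=
    HasProjectiveResolution.out
  set F0 : ModuleCat.{u} R := Pres.complex.X 0 with hF0
  set D1 : Pres.complex.X 1 ⟶ F0 := Pres.complex.d 1 0 with hD1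
  set D2 : Pres.complex.X 2 ⟶ Pres.complex.X 1 := Pres.complex.d 2 1 with hD2
  set π0 : F0 ⟶ ModuleCat.of R P := Pres.π.f 0 with hπ0
  have hsurj : Function.Surjective π0 := by
    rw [← ModuleCat.epi_iff_surjective, hπ0]
    exact Limits.epi_of_isColimit_cofork Pres.isColimitCokernelCofork
  have hcomp : D1 ≫ π0 = 0 := Pres.complex_d_comp_π_f_zero
  have hcomp' : ∀ x, π0 (D1 x) = 0 := fun x => congrArg (fun f => f x) hcomp
  have hdd : ∀ x, D1 (D2 x) = 0 :=
    fun x => congrArg (fun f => f x) (Pres.complex.d_comp_d 2 1 0)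
  have hex0 : (ShortComplex.mk D1 π0 hcomp).Exact :=
    ShortComplex.exact_of_g_is_cokernel _ Pres.isColimitCokernelCofork
  have hker : LinearMap.ker π0.hom ≤ LinearMap.range D1.hom :=
    (ShortComplex.moduleCat_exact_iff_ker_sub_range _).1 hex0
  have hex1 : LinearMap.ker D1.hom ≤ LinearMap.range D2.hom :=
    (ShortComplex.moduleCat_exact_iff_ker_sub_range _).1 (Pres.exact_succ 0)
  have hproj : Module.Projective R F0 :=
    (IsProjective.iff_projective (R := R) F0).2 (Pres.projective 0)
  constructor
  · -- torsion Ext ⟹ lifting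
    intro hP B C _ _ _ _ g hg h
    -- Step 1: obtain t : P →ₗ F0 and s with π0 ∘ t = s • id
    obtain ⟨s, hs, hq⟩ := (isUSTorsionMod_ext_one_iff S P Pres
      (ModuleCat.of R (LinearMap.ker π0.hom))).1
      (hP (ModuleCat.of R (LinearMap.ker π0.hom)))
    obtain ⟨r, hr⟩ := hq
      (ModuleCat.ofHom (LinearMap.codRestrict (LinearMap.ker π0.hom)
        D1.hom (fun x => by simpa [LinearMap.mem_ker] using hcomp' x)))
      (by ext x; exact hdd x)
    have hr' : ∀ x, (r (D1 x)).1 = s • D1 x := by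
      intro x
      exact congrArg (fun f => (f x).1) hr
    set φ : F0 →ₗ[R] F0 := s • LinearMap.id -
      (LinearMap.ker π0.hom).subtype ∘ₗ
        r.hom with hφ
    have hφker : LinearMap.ker π0.hom ≤ LinearMap.ker φ := by
      intro x hx
      obtain ⟨y, rfl⟩ := hker hx
      simp only [hφ, LinearMap.mem_ker, LinearMap.sub_apply, LinearMap.smul_apply,
        LinearMap.id_apply, LinearMap.comp_apply, Submodule.coe_subtype]
      rw [sub_eq_zero]
      exact (hr' y).symm
    set t : P →ₗ[R] F0 :=
      ((LinearMap.ker π0.hom).liftQ φ hφker).comp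
        (LinearMap.quotKerEquivOfSurjective
          π0.hom hsurj).symm.toLinearMap with ht
    have heq_mk : ∀ x : F0,
        (LinearMap.quotKerEquivOfSurjective π0.hom hsurj).symm
          (π0 x) = Submodule.Quotient.mk x := by
      intro x
      apply (LinearMap.quotKerEquivOfSurjective
        π0.hom hsurj).injective
      rw [LinearEquiv.apply_symm_apply]
      rfl
    have htπ : ∀ x : F0, t (π0 x) = φ x := by
      intro x
      exact congrArg ((LinearMap.ker π0.hom).liftQ φ hφker)
        (heq_mk x)
    have hπt : ∀ p : P, π0 (t p) = s • p := by
      intro p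
      obtain ⟨x, rfl⟩ := hsurj p
      rw [htπ x]
      have h0 : π0 ((r x).1) = 0 := (r x).2
      simp only [hφ, LinearMap.sub_apply, map_sub, LinearMap.smul_apply, LinearMap.id_apply,
        map_smul, LinearMap.comp_apply, Submodule.coe_subtype]
      rw [sub_eq_self]
      exact h0
    -- Step 2: lift h ∘ π0 through g using projectivity of F0
    obtain ⟨w, hw⟩ := Module.projective_lifting_property g
      (h ∘ₗ π0.hom) hg
    refine ⟨w ∘ₗ t, s, hs, fun p => ?_⟩
    have : g (w (t p)) = h (π0 (t p)) := congrArg (fun f => f (t p)) hw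
    rw [LinearMap.comp_apply, this, hπt p, map_smul]
  · -- lifting ⟹ torsion Ext
    intro hlift M
    obtain ⟨t, s, hs, hst⟩ := hlift F0 P π0.hom hsurj LinearMap.id
    have hπt : ∀ p : P, π0 (t p) = s • p := fun p => (hst p).symm
    rw [isUSTorsionMod_ext_one_iff S P Pres M]
    refine ⟨s, hs, fun q hq => ?_⟩
    have hq' : ∀ x, q (D2 x) = 0 := fun x => congrArg (fun f => f x) hq
    -- ψ x = s • x - t (π0 x) lands in range D1
    have hmem : ∀ x : F0, s • x - t (π0 x) ∈ LinearMap.range D1.hom := by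
      intro x
      apply hker
      rw [LinearMap.mem_ker, map_sub, map_smul, hπt (π0 x), sub_self]
    set ψ : F0 →ₗ[R] LinearMap.range D1.hom :=
      LinearMap.codRestrict _ (s • LinearMap.id - t ∘ₗ π0.hom)
        (fun x => hmem x) with hψ
    obtain ⟨β, hβ⟩ := Module.projective_lifting_property
      D1.hom.rangeRestrict ψ (LinearMap.surjective_rangeRestrict _)
    have hβ' : ∀ x : F0, D1 (β x) = s • x - t (π0 x) := by
      intro x
      have := congrArg (fun f => ((f x : LinearMap.range D1.hom) : F0)) hβ
      simpa [hψ] using this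
    refine ⟨ModuleCat.ofHom (q.hom ∘ₗ β), ?_⟩
    ext x
    show q (β (D1 x)) = (s • q) x
    have h1 : D1 (β (D1 x) - s • x) = 0 := by
      rw [map_sub, hβ' (D1 x), hcomp' x, map_zero, sub_zero, map_smul, sub_self]
    obtain ⟨y, hy⟩ := hex1 (LinearMap.mem_ker.2 h1)
    have : q (β (D1 x) - s • x) = 0 := by rw [← hy]; exact hq' y
    have h2 : q (β (D1 x)) - s • q x = 0 := by
      rw [← this, map_sub, map_smul]
    exact sub_eq_zero.1 h2
end

section
/- Let R be a commutative ring, S a multiplicative subset, and P an R-module. If Ext¹_R(P, M) is u-S-torsion for every R-module M, then Extⁿ_R(P, M) is u-S-torsion for every R-module M and every n ≥ 1. -/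
open CategoryTheory

universe u

namespace USHelper

variable {R : Type u} [CommRing R]

lemma torsion_of_iso {X Y : ModuleCat.{u} R} (e : X ≅ Y) (s : R)
    (h : ∀ y : Y, s • y = 0) (x : X) : s • x = 0 := by
  have h1 : e.hom (s • x) = 0 := by rw [map_smul]; exact h _
  calc s • x = e.inv (e.hom (s • x)) := (Iso.hom_inv_id_apply e _).symm
  _ = 0 := by rw [h1, map_zero]

lemma homology_torsion (T : ShortComplex (ModuleCat.{u} R)) (s : R)
    (h : ∀ f : LinearMap.ker T.g.hom, ∃ g : T.X₁, T.f g = s • (f : T.X₂)) :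
    ∀ x : T.homology, s • x = 0 := by
  refine torsion_of_iso T.moduleCatHomologyIso s ?_
  intro y
  obtain ⟨z, rfl⟩ := Submodule.Quotient.mk_surjective _ y
  change s • (Submodule.Quotient.mk z : LinearMap.ker T.g.hom ⧸ LinearMap.range T.moduleCatToCycles) = 0
  rw [← Submodule.Quotient.mk_smul, Submodule.Quotient.mk_eq_zero]
  obtain ⟨g, hg⟩ := h z
  exact ⟨g, Subtype.ext hg⟩

lemma torsion_homology_mem (T : ShortComplex (ModuleCat.{u} R)) (s : R)
    (h : ∀ x : T.homology, s • x = 0) (f : LinearMap.ker T.g.hom) :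
    ∃ g : T.X₁, T.f g = s • (f : T.X₂) := by
  have h' : ∀ y : T.moduleCatLeftHomologyData.H, s • y = 0 :=
    torsion_of_iso T.moduleCatHomologyIso.symm s h
  have h2 : s • (Submodule.Quotient.mk f : LinearMap.ker T.g.hom ⧸ LinearMap.range T.moduleCatToCycles) = 0 :=
    h' (Submodule.Quotient.mk f)
  rw [← Submodule.Quotient.mk_smul, Submodule.Quotient.mk_eq_zero] at h2
  obtain ⟨g, hg⟩ := h2
  exact ⟨g, congrArg Subtype.val hg⟩

noncomputable def extIso (P M : ModuleCat.{u} R) (Q : ProjectiveResolution P) (m : ℕ) :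
    ext R (m+1) P M ≅ ((Q.complex.linearYonedaObj R M).sc' m (m+1) (m+2)).homology :=
  Q.isoExt (m+1) M ≪≫
    (Q.complex.linearYonedaObj R M).homologyIsoSc' m (m+1) (m+2) (by simp) (by simp)

section
variable {P : ModuleCat.{u} R} (Q : ProjectiveResolution P) (s : R)

noncomputable abbrev N0 : ModuleCat.{u} R := ModuleCat.of R (LinearMap.ker (Q.π.f 0).hom)

noncomputable def iota : N0 Q ⟶ Q.complex.X 0 := ModuleCat.ofHom (LinearMap.ker (Q.π.f 0).hom).subtype

noncomputable def cocyc : Q.complex.X 1 ⟶ N0 Q :=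
  ModuleCat.ofHom (LinearMap.codRestrict (LinearMap.ker (Q.π.f 0).hom)
    (Q.complex.d 1 0).hom
    (fun p => by
      rw [LinearMap.mem_ker]
      exact DFunLike.congr_fun (ModuleCat.hom_ext_iff.1 Q.complex_d_comp_π_f_zero) p))

variable (g : Q.complex.X 0 ⟶ N0 Q) (hg : Q.complex.d 1 0 ≫ g = s • cocyc Q)

noncomputable def theta : ((ChainComplex.single₀ (ModuleCat.{u} R)).obj P).X 0 ⟶ Q.complex.X 0 :=
  Abelian.epiDesc (Q.π.f 0) (s • 𝟙 (Q.complex.X 0) - g ≫ iota Q)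
    (by
      ext y
      have hy : Q.π.f 0 (Limits.kernel.ι (Q.π.f 0) y) = 0 :=
        DFunLike.congr_fun (ModuleCat.hom_ext_iff.1 (Limits.kernel.condition (Q.π.f 0))) y
      have hexact := Q.exact₀
      rw [ShortComplex.moduleCat_exact_iff] at hexact
      obtain ⟨p, hp⟩ := hexact _ hy
      have hgx : g (Limits.kernel.ι (Q.π.f 0) y) = s • cocyc Q p := by
        rw [← hp]; exact DFunLike.congr_fun (ModuleCat.hom_ext_iff.1 hg) p
      have hcp : iota Q (cocyc Q p) = Q.complex.d 1 0 p := rfl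
      show (s • 𝟙 (Q.complex.X 0) - g ≫ iota Q) (Limits.kernel.ι (Q.π.f 0) y) = 0
      show (s • 𝟙 (Q.complex.X 0) - g ≫ iota Q).hom (Limits.kernel.ι (Q.π.f 0) y) = 0
      rw [ModuleCat.hom_sub, LinearMap.sub_apply]
      show s • (Limits.kernel.ι (Q.π.f 0) y) - iota Q (g (Limits.kernel.ι (Q.π.f 0) y)) = 0
      rw [hgx, map_smul, hcp, hp, sub_self])

lemma comp_theta : Q.π.f 0 ≫ theta Q s g hg = s • 𝟙 (Q.complex.X 0) - g ≫ iota Q :=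
  Abelian.comp_epiDesc _ _ _

lemma theta_comp : theta Q s g hg ≫ Q.π.f 0 = s • 𝟙 _ := by
  have hιπ : iota Q ≫ Q.π.f 0 = 0 := by
    ext z
    have : (iota Q ≫ Q.π.f 0) z = Q.π.f 0 (iota Q z) := rfl
    rw [this]
    exact z.2
  rw [← cancel_epi (Q.π.f 0), ← Category.assoc, comp_theta, Preadditive.sub_comp,
    Linear.smul_comp, Category.id_comp, Category.assoc, hιπ, Limits.comp_zero,
    sub_zero, Linear.comp_smul, Category.comp_id]

noncomputable def uMap : Q.complex ⟶ Q.complex where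
  f i := match i with
    | 0 => s • 𝟙 (Q.complex.X 0) - Q.π.f 0 ≫ theta Q s g hg
    | _+1 => s • 𝟙 _
  comm' := by
    rintro i j (rfl : j + 1 = i)
    match j with
    | 0 =>
      show (s • 𝟙 _) ≫ Q.complex.d 1 0 = Q.complex.d 1 0 ≫ _
      rw [Preadditive.comp_sub, Linear.smul_comp, Category.id_comp,
        Linear.comp_smul, Category.comp_id, ← Category.assoc,
        Q.complex_d_comp_π_f_zero, Limits.zero_comp, sub_zero]
    | j+1 =>
      show (s • 𝟙 _) ≫ _ = _ ≫ (s • 𝟙 _)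
      rw [Linear.smul_comp, Category.id_comp, Linear.comp_smul, Category.comp_id]

lemma uMap_comp_pi : uMap Q s g hg ≫ Q.π = 0 := by
  refine HomologicalComplex.hom_ext _ _ (fun n => ?_)
  match n with
  | 0 =>
    show (s • 𝟙 _ - Q.π.f 0 ≫ theta Q s g hg) ≫ Q.π.f 0 = 0
    rw [Preadditive.sub_comp, Linear.smul_comp, Category.id_comp, Category.assoc,
      theta_comp, Linear.comp_smul, Category.comp_id, sub_self]
  | n+1 =>
    show _ ≫ Q.π.f (n+1) = 0
    rw [Q.π_f_succ, Limits.comp_zero]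

noncomputable def nullHtpy : Homotopy (uMap Q s g hg) 0 :=
  CategoryTheory.ProjectiveResolution.liftHomotopyZero _ (uMap_comp_pi Q s g hg)

lemma key_htpy (m : ℕ) :
    s • 𝟙 (Q.complex.X (m+1)) =
      Q.complex.d (m+1) m ≫ (nullHtpy Q s g hg).hom m (m+1) +
        (nullHtpy Q s g hg).hom (m+1) (m+2) ≫ Q.complex.d (m+2) (m+1) := by
  have h := (nullHtpy Q s g hg).comm (m+1)
  rw [dNext_eq _ (show (ComplexShape.down ℕ).Rel (m+1) m by simp),
    prevD_eq _ (show (ComplexShape.down ℕ).Rel (m+2) (m+1) by simp)] at h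
  exact (by simpa using h : (uMap Q s g hg).f (m+1) = _)

end

end USHelper

/-- if `Ext¹(P, M)` is `u`-`S`-torsion for all `M`, then so is
`Extⁿ(P, M)` for all `n ≥ 1` and all `M`. -/
theorem uS_projective_ext_n_torsion
    {R : Type u} [CommRing R] (S : Submonoid R)
    (P : ModuleCat.{u} R)
    (h : ∀ M : ModuleCat.{u} R, IsUSTorsionMod S (ext R 1 P M)) :
    ∀ (n : ℕ), 1 ≤ n → ∀ M : ModuleCat.{u} R, IsUSTorsionMod S (ext R n P M) := by
  obtain ⟨Q⟩ : Nonempty (ProjectiveResolution P) := ⟨ProjectiveResolution.of P⟩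
  obtain ⟨s, hsS, hs⟩ := h (USHelper.N0 Q)
  -- transport torsion of Ext¹ to the concrete homology of the Hom complex
  have hs' : ∀ x : ((Q.complex.linearYonedaObj R (USHelper.N0 Q)).sc' 0 1 2).homology,
      s • x = 0 :=
    USHelper.torsion_of_iso (USHelper.extIso P (USHelper.N0 Q) Q 0).symm s hs
  -- the canonical cocycle is a cycle of this short complex
  have hc : ((Q.complex.linearYonedaObj R (USHelper.N0 Q)).sc' 0 1 2).g
      (USHelper.cocyc Q) = 0 := by
    show Q.complex.d 2 1 ≫ USHelper.cocyc Q = 0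
    ext p
    show Q.complex.d 1 0 (Q.complex.d 2 1 p) = 0
    exact DFunLike.congr_fun (ModuleCat.hom_ext_iff.1 (Q.complex.d_comp_d 2 1 0)) p
  obtain ⟨(g : Q.complex.X 0 ⟶ USHelper.N0 Q), hgT⟩ := USHelper.torsion_homology_mem _ s hs'
    ⟨USHelper.cocyc Q, hc⟩
  have hg : Q.complex.d 1 0 ≫ g = s • USHelper.cocyc Q := hgT
  intro n hn M
  obtain ⟨m, rfl⟩ : ∃ m, n = m + 1 := ⟨n - 1, (Nat.succ_pred_eq_of_pos hn).symm⟩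
  refine ⟨s, hsS, ?_⟩
  refine USHelper.torsion_of_iso (USHelper.extIso P M Q m) s ?_
  refine USHelper.homology_torsion _ s ?_
  intro f
  have hcoc : Q.complex.d (m+2) (m+1) ≫
      (f.1 : Q.complex.X (m+1) ⟶ M) = 0 := f.2
  refine ⟨(USHelper.nullHtpy Q s g hg).hom m (m+1) ≫ (f.1 : Q.complex.X (m+1) ⟶ M), ?_⟩
  show Q.complex.d (m+1) m ≫
      ((USHelper.nullHtpy Q s g hg).hom m (m+1) ≫ (f.1 : Q.complex.X (m+1) ⟶ M)) =
    s • (f.1 : Q.complex.X (m+1) ⟶ M)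
  have hkey := USHelper.key_htpy Q s g hg m
  calc Q.complex.d (m+1) m ≫
      ((USHelper.nullHtpy Q s g hg).hom m (m+1) ≫ (f.1 : Q.complex.X (m+1) ⟶ M))
      = (Q.complex.d (m+1) m ≫ (USHelper.nullHtpy Q s g hg).hom m (m+1) +
          (USHelper.nullHtpy Q s g hg).hom (m+1) (m+2) ≫ Q.complex.d (m+2) (m+1)) ≫
          (f.1 : Q.complex.X (m+1) ⟶ M) := by
        have key : ∀ F : Q.complex.X (m+1) ⟶ M, Q.complex.d (m+2) (m+1) ≫ F = 0 →
            Q.complex.d (m+1) m ≫ ((USHelper.nullHtpy Q s g hg).hom m (m+1) ≫ F) =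
            (Q.complex.d (m+1) m ≫ (USHelper.nullHtpy Q s g hg).hom m (m+1) +
              (USHelper.nullHtpy Q s g hg).hom (m+1) (m+2) ≫ Q.complex.d (m+2) (m+1)) ≫ F := by
          intro F hcoc
          rw [Preadditive.add_comp, Category.assoc, Category.assoc, hcoc,
            Limits.comp_zero, add_zero]
        exact key _ hcoc
  _ = (s • 𝟙 (Q.complex.X (m+1))) ≫ (f.1 : Q.complex.X (m+1) ⟶ M) := by rw [← hkey]
  _ = s • (show Q.complex.X (m+1) ⟶ M from f.1) :=
    (Linear.smul_comp _ _ _ s (𝟙 _) (f.1 : Q.complex.X (m+1) ⟶ M)).trans (congrArg (s • ·) (Category.id_comp _))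
end

section
/- Let R be a commutative ring and S a multiplicative subset. Every u-S-projective R-module is u-S-flat. -/
open CategoryTheory

universe u

section Aux

open CategoryTheory.Limits CategoryTheory.MonoidalCategory

variable {R : Type u} [CommRing R]

lemma torsion_of_iso' {X Y : ModuleCat.{u} R} (e : X ≅ Y) (s : R)
    (h : ∀ x : X, s • x = 0) : ∀ y : Y, s • y = 0 := by
  intro y
  have h1 : e.hom (e.inv y) = y := e.inv_hom_id_apply y
  calc s • y = e.hom (s • e.inv y) := by rw [map_smul, h1]
  _ = e.hom 0 := by rw [h (e.inv y)]
  _ = 0 := map_zero _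

lemma single₀_map_smul' {X Y : ModuleCat.{u} R} (f : X ⟶ Y) (s : R) :
    (ChainComplex.single₀ (ModuleCat.{u} R)).map (s • f)
      = s • (ChainComplex.single₀ (ModuleCat.{u} R)).map f := by
  apply HomologicalComplex.hom_ext
  intro n
  match n with
  | 0 => simp; rfl
  | (n + 1 : ℕ) =>
    apply (HomologicalComplex.isZero_single_obj_X (ComplexShape.down ℕ) 0 X (n+1)
      (by simp)).eq_of_src

lemma homologyFunctor_map_smul' {c : ComplexShape ℕ}
    {K L : HomologicalComplex (ModuleCat.{u} R) c} (φ : K ⟶ L) (s : R) (i : ℕ) :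
    (HomologicalComplex.homologyFunctor (ModuleCat.{u} R) c i).map (s • φ)
      = s • (HomologicalComplex.homologyFunctor (ModuleCat.{u} R) c i).map φ := by
  have h : (HomologicalComplex.shortComplexFunctor (ModuleCat.{u} R) c i).map (s • φ)
      = s • (HomologicalComplex.shortComplexFunctor (ModuleCat.{u} R) c i).map φ := by
    ext <;> rfl
  show HomologicalComplex.homologyMap (s • φ) i = s • HomologicalComplex.homologyMap φ i
  unfold HomologicalComplex.homologyMap
  rw [h, ShortComplex.homologyMap_smul]
  rfl

lemma leftDerived_map_smul' (F : ModuleCat.{u} R ⥤ ModuleCat.{u} R) [F.Additive] [F.Linear R]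
    (n : ℕ) {X Y : ModuleCat.{u} R} (f : X ⟶ Y) (s : R) :
    (F.leftDerived n).map (s • f) = s • (F.leftDerived n).map f := by
  have P : ProjectiveResolution X := (HasProjectiveResolution.out (Z := X)).some
  have Q : ProjectiveResolution Y := (HasProjectiveResolution.out (Z := Y)).some
  let g := ProjectiveResolution.lift f P Q
  rw [F.leftDerived_map_eq n f g (ProjectiveResolution.lift_commutes f P Q),
    F.leftDerived_map_eq n (s • f) (s • g) (by
      rw [Linear.smul_comp, ProjectiveResolution.lift_commutes, single₀_map_smul',
        Linear.comp_smul]),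
    Functor.comp_map, Functor.comp_map, Functor.map_smul, homologyFunctor_map_smul',
    Linear.smul_comp, Linear.comp_smul]

end Aux

open CategoryTheory.Limits CategoryTheory.MonoidalCategory in
/-- every `u`-`S`-projective module is `u`-`S`-flat. -/
theorem uS_projective_implies_uS_flat
    {R : Type u} [CommRing R] (S : Submonoid R)
    (P : Type u) [AddCommGroup P] [Module R P]
    (hP : IsUSProjective S P) :
    ∀ M : ModuleCat.{u} R,
      IsUSTorsionMod S (((Tor (ModuleCat.{u} R) 1).obj M).obj (ModuleCat.of R P)) := by
  intro M
  let P' : ModuleCat.{u} R := ModuleCat.of R P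
  have Pr : ProjectiveResolution P' := (HasProjectiveResolution.out (Z := P')).some
  let F₀ := Pr.complex.X 0
  let F₁ := Pr.complex.X 1
  let d10 : F₁ ⟶ F₀ := Pr.complex.d 1 0
  let p : F₀ ⟶ P' := Pr.π.f 0
  let S0 : ShortComplex (ModuleCat.{u} R) := ShortComplex.mk d10 p Pr.complex_d_comp_π_f_zero
  have hS0 : S0.Exact := Pr.exact₀
  have hsurj0 : Function.Surjective S0.moduleCatToCycles :=
    S0.exact_iff_surjective_moduleCatToCycles.mp hS0
  let K : ModuleCat.{u} R := ModuleCat.of R (LinearMap.ker p.hom)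
  obtain ⟨s, hsS, hstor⟩ := hP K
  refine ⟨s, hsS, ?_⟩
  let C' := Pr.complex.linearYonedaObj R K
  let S1 : ShortComplex (ModuleCat.{u} R) := C'.sc' 0 1 2
  have e1 : C'.homology 1 ≅ S1.homology :=
    C'.homologyIsoSc' 0 1 2 (by simp [CochainComplex.prev]) (by simp [CochainComplex.next])
  have tor1 : ∀ x : C'.homology 1, s • x = 0 :=
    torsion_of_iso' (Pr.isoExt 1 K) s hstor
  have tor2 : ∀ x : S1.moduleCatLeftHomologyData.H, s • x = 0 :=
    torsion_of_iso' (e1 ≪≫ S1.moduleCatHomologyIso) s tor1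
  -- the cocycle z
  let z : F₁ →ₗ[R] LinearMap.ker p.hom := S0.moduleCatToCycles
  have hz : S1.g (ModuleCat.ofHom z) = 0 := by
    show Pr.complex.d 2 1 ≫ (ModuleCat.ofHom z) = 0
    apply ModuleCat.hom_ext
    apply LinearMap.ext
    intro x
    apply Subtype.ext
    show Pr.complex.d 1 0 (Pr.complex.d 2 1 x) = (0 : LinearMap.ker p.hom).1
    have := ConcreteCategory.congr_hom (Pr.complex.d_comp_d 2 1 0) x
    exact this.trans rfl
  let zc : LinearMap.ker S1.g.hom := ⟨ModuleCat.ofHom z, hz⟩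
  have hmem : (s • zc) ∈ LinearMap.range S1.moduleCatToCycles := by
    have h0 : (LinearMap.range S1.moduleCatToCycles).mkQ (s • zc) = 0 := by
      rw [map_smul]; exact tor2 _
    exact (Submodule.Quotient.mk_eq_zero _).mp h0
  obtain ⟨h, hh⟩ := hmem
  let h' : F₀ ⟶ K := h
  have hh1 : (d10 ≫ h' : F₁ ⟶ K) = s • ModuleCat.ofHom z := congrArg Subtype.val hh
  have hh' : ∀ x : F₁, h' (d10 x) = s • z x := fun x => ConcreteCategory.congr_hom hh1 x
  -- h' restricted to ker p is multiplication by s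
  have hK : ∀ k : LinearMap.ker p.hom, h' k.1 = s • k := by
    intro k
    obtain ⟨x, hx⟩ := hsurj0 k
    subst hx
    exact hh' x
  -- the endomorphism of F₀ killing ker p
  let gl : (F₀ : Type u) →ₗ[R] F₀ :=
    s • LinearMap.id - (LinearMap.ker p.hom).subtype ∘ₗ h'.hom
  have hker : LinearMap.ker p.hom ≤ LinearMap.ker gl := by
    intro x hx
    have h1 : gl x = s • x - (h' x).1 := rfl
    have h2 : h' x = s • (⟨x, hx⟩ : LinearMap.ker p.hom) := hK ⟨x, hx⟩
    have h3 : gl x = 0 := by rw [h1, h2]; exact sub_self _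
    exact h3
  have hglp : ∀ x : F₀, p (gl x) = s • p x := by
    intro x
    have h1 : p (gl x) = s • p x - p ((h' x).1) := by
      show p (s • x - (h' x).1) = _
      rw [map_sub, map_smul]
    rw [h1, LinearMap.mem_ker.mp (h' x).2, sub_zero]
  have hp_surj : Function.Surjective p := (ModuleCat.epi_iff_surjective p).mp (inferInstance : Epi (Pr.π.f 0))
  let q : P' ⟶ F₀ := ModuleCat.ofHom <|
    (Submodule.liftQ (LinearMap.ker p.hom) gl hker) ∘ₗ
      ((LinearMap.quotKerEquivOfSurjective p.hom hp_surj).symm :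
        (P' : Type u) →ₗ[R] ((F₀ : Type u) ⧸ LinearMap.ker p.hom))
  have he : ∀ x : F₀, (LinearMap.quotKerEquivOfSurjective p.hom hp_surj).symm (p x)
      = Submodule.Quotient.mk x := by
    intro x
    rw [LinearEquiv.symm_apply_eq]
    simp [LinearMap.quotKerEquivOfSurjective]
  have hq : ∀ y : P', p (q y) = s • y := by
    intro y
    obtain ⟨x, rfl⟩ := hp_surj y
    show p ((Submodule.liftQ (LinearMap.ker p.hom) gl hker)
      ((LinearMap.quotKerEquivOfSurjective p.hom hp_surj).symm (p x))) = s • p x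
    rw [he x, Submodule.liftQ_apply]
    exact hglp x
  have hfac : q ≫ p = s • 𝟙 P' := ModuleCat.hom_ext (LinearMap.ext hq)
  -- Tor part
  intro x
  let Fm := (tensoringLeft (ModuleCat.{u} R)).obj M
  haveI : Projective F₀ := Pr.projective 0
  have hzero : IsZero ((Fm.leftDerived 1).obj F₀) :=
    Fm.isZero_leftDerived_obj_projective_succ 0 F₀
  have hmap0 : (Fm.leftDerived 1).map (s • 𝟙 P') = 0 := by
    rw [← hfac, Functor.map_comp, hzero.eq_zero_of_tgt ((Fm.leftDerived 1).map q), zero_comp]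
  rw [leftDerived_map_smul', CategoryTheory.Functor.map_id] at hmap0
  exact ConcreteCategory.congr_hom hmap0 x
end

section
/- Let 0 → A → B → C → 0 be a short exact sequence of R-modules. If A and C are u-S-projective, then so is B. -/
open CategoryTheory

universe u

section Aux

variable {R : Type u} [CommRing R]

/-- Lifting property: every map from the kernel of `π` to `M` can be extended to `F`
after multiplication by `s`. -/
def USLifts (s : R) {F X : Type u} [AddCommGroup F] [Module R F] [AddCommGroup X] [Module R X]
    (π : F →ₗ[R] X) (M : Type u) [AddCommGroup M] [Module R M] : Prop :=
  ∀ φ : (LinearMap.ker π) →ₗ[R] M, ∃ ψ : F →ₗ[R] M, ∀ k : LinearMap.ker π, ψ k = s • φ k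

lemma usLifts_transfer {s : R} {F F' X M : Type u}
    [AddCommGroup F] [Module R F] [AddCommGroup F'] [Module R F']
    [AddCommGroup X] [Module R X] [AddCommGroup M] [Module R M]
    (π : F →ₗ[R] X) (π' : F' →ₗ[R] X)
    (hF : Module.Projective R F) (hF' : Module.Projective R F')
    (hπ : Function.Surjective π) (hπ' : Function.Surjective π')
    (h : USLifts s π M) : USLifts s π' M := by
  obtain ⟨w, hw⟩ := Module.projective_lifting_property π' π hπ'
  obtain ⟨u, hu⟩ := Module.projective_lifting_property π π' hπ
  intro φ'
  -- w maps ker π to ker π'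
  have hwk : ∀ k : LinearMap.ker π, w k ∈ LinearMap.ker π' := by
    intro k
    have : π' (w k) = π k := LinearMap.congr_fun hw k
    simpa [this] using k.2
  set wK : LinearMap.ker π →ₗ[R] LinearMap.ker π' :=
    LinearMap.codRestrict _ (w ∘ₗ (LinearMap.ker π).subtype) (fun k => hwk k) with hwK
  obtain ⟨ψ, hψ⟩ := h (φ' ∘ₗ wK)
  have huk : ∀ x : F', w (u x) - x ∈ LinearMap.ker π' := by
    intro x
    have h1 : π' (w (u x)) = π (u x) := LinearMap.congr_fun hw (u x)
    have h2 : π (u x) = π' x := LinearMap.congr_fun hu x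
    simp [LinearMap.mem_ker, map_sub, h1, h2]
  set hmap : F' →ₗ[R] LinearMap.ker π' :=
    LinearMap.codRestrict _ ((w ∘ₗ u) - LinearMap.id) (fun x => huk x) with hhmap
  refine ⟨ψ ∘ₗ u - s • (φ' ∘ₗ hmap), fun k' => ?_⟩
  have huk' : u k' ∈ LinearMap.ker π := by
    have : π (u k') = π' k' := LinearMap.congr_fun hu k'
    simpa [this] using k'.2
  have e1 : ψ (u k') = s • φ' (wK ⟨u k', huk'⟩) := hψ ⟨u k', huk'⟩
  have e2 : wK ⟨u k', huk'⟩ = k' + hmap k' := by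
    apply Subtype.ext
    simp [hwK, hhmap]
    rfl
  calc (ψ ∘ₗ u - s • (φ' ∘ₗ hmap)) k'
      = ψ (u k') - s • φ' (hmap k') := by simp
    _ = s • φ' (k' + hmap k') - s • φ' (hmap k') := by rw [e1, e2]
    _ = s • φ' k' := by rw [map_add, smul_add]; abel

lemma isUSTorsionMod_of_iso {S : Submonoid R} {X Y : ModuleCat.{u} R} (e : X ≅ Y)
    (h : IsUSTorsionMod S X) : IsUSTorsionMod S Y := by
  obtain ⟨s, hs, h⟩ := h
  refine ⟨s, hs, fun y => ?_⟩
  have h1 : e.hom.hom (s • e.inv.hom y) = 0 := by rw [h]; simp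
  rw [map_smul] at h1
  have h2 : e.hom.hom (e.inv.hom y) = y := by
    show (e.inv ≫ e.hom) y = y
    rw [Iso.inv_hom_id]; rfl
  rwa [h2] at h1

end Aux
section Crit

variable {R : Type u} [CommRing R] (S : Submonoid R)

lemma ext_one_torsion_iff (X M : ModuleCat.{u} R) (Q : ProjectiveResolution X) :
    IsUSTorsionMod S (ext R 1 X M) ↔
      ∃ s ∈ S, USLifts s ((Q.π.f 0).hom : Q.complex.X 0 →ₗ[R] X) M := by
  classical
  set π₀ : Q.complex.X 0 →ₗ[R] X := ((Q.π.f 0).hom : Q.complex.X 0 →ₗ[R] X) with hπ₀def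
  set CX := Q.complex.linearYonedaObj R M with hCX
  set sc := CX.sc' 0 1 2 with hsc
  have e : ext R 1 X M ≅ sc.moduleCatLeftHomologyData.H :=
    Q.isoExt 1 M ≪≫ CX.homologyIsoSc' 0 1 2 (by simp) (by simp) ≪≫ sc.moduleCatHomologyIso
  -- exactness facts
  have hd21 : LinearMap.range (Q.complex.d 2 1).hom
      = LinearMap.ker (Q.complex.d 1 0).hom := by
    have h := (Q.complex.exactAt_iff' 2 1 0 (by simp) (by simp)).mp (Q.complex_exactAt_succ 0)
    exact (ShortComplex.moduleCat_exact_iff_range_eq_ker _).mp h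
  have hd10 : LinearMap.range (Q.complex.d 1 0).hom
      = LinearMap.ker π₀ :=
    (ShortComplex.moduleCat_exact_iff_range_eq_ker _).mp Q.exact₀
  have hπ₀surj : Function.Surjective π₀ := by
    have h : Epi Q.cokernelCofork.π := Limits.epi_of_isColimit_cofork Q.isColimitCokernelCofork
    have h2 : Epi (Q.π.f 0) := h
    exact (ModuleCat.epi_iff_surjective (Q.π.f 0)).mp h2
  -- the corestricted differential
  have hmemk : ∀ x : Q.complex.X 1, (Q.complex.d 1 0).hom x ∈ LinearMap.ker π₀ := fun x =>
    hd10 ▸ LinearMap.mem_range_self _ x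
  set d10k : Q.complex.X 1 →ₗ[R] LinearMap.ker π₀ :=
    LinearMap.codRestrict _ (Q.complex.d 1 0).hom hmemk
    with hd10k
  have hd10ksurj : Function.Surjective d10k := by
    rintro ⟨kv, hk⟩
    obtain ⟨x, hx⟩ := hd10.symm ▸ hk
    exact ⟨x, Subtype.ext hx⟩
  -- elementwise description of the differentials of CX
  have happ01 : ∀ ψ : Q.complex.X 0 ⟶ M, ((CX.d 0 1) ψ : Q.complex.X 1 ⟶ M)
      = Q.complex.d 1 0 ≫ ψ := fun ψ => rfl
  have happ12 : ∀ z : Q.complex.X 1 ⟶ M, ((CX.d 1 2) z : Q.complex.X 2 ⟶ M)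
      = Q.complex.d 2 1 ≫ z := fun z => rfl
  have hscf : ∀ ψ : Q.complex.X 0 ⟶ M, (sc.f ψ : Q.complex.X 1 ⟶ M) = Q.complex.d 1 0 ≫ ψ :=
    happ01
  have hscg : ∀ z : Q.complex.X 1 ⟶ M, (sc.g z : Q.complex.X 2 ⟶ M) = Q.complex.d 2 1 ≫ z :=
    happ12
  constructor
  · intro h
    obtain ⟨s, hs, hkill⟩ := isUSTorsionMod_of_iso e h
    refine ⟨s, hs, fun φ => ?_⟩
    set z : Q.complex.X 1 ⟶ M := ModuleCat.ofHom (φ ∘ₗ d10k) with hzdef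
    have hz : (z : ↥(sc.X₂)) ∈ LinearMap.ker sc.g.hom := by
      change sc.g.hom (z : ↥(sc.X₂)) = 0
      show (sc.g z : Q.complex.X 2 ⟶ M) = 0
      rw [hscg]
      apply ModuleCat.hom_ext
      apply LinearMap.ext
      intro x
      have h1 : d10k ((Q.complex.d 2 1).hom x) = 0 := by
        apply Subtype.ext
        exact LinearMap.congr_fun (congrArg ModuleCat.Hom.hom (Q.complex.d_comp_d 2 1 0)) x
      show φ (d10k ((Q.complex.d 2 1).hom x)) = 0
      rw [h1]; exact map_zero φ
    have hq := hkill (Submodule.Quotient.mk ⟨z, hz⟩)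
    change (Submodule.Quotient.mk (s • (⟨z, hz⟩ : LinearMap.ker sc.g.hom)) :
      LinearMap.ker sc.g.hom ⧸ LinearMap.range sc.moduleCatToCycles) = 0 at hq
    rw [Submodule.Quotient.mk_eq_zero] at hq
    obtain ⟨ψ, hψ⟩ := hq
    set Ψ : Q.complex.X 0 →ₗ[R] M := (show Q.complex.X 0 ⟶ M from ψ).hom with hΨ
    refine ⟨Ψ, fun k => ?_⟩
    obtain ⟨x, hx⟩ : (k : Q.complex.X 0) ∈ LinearMap.range
        (Q.complex.d 1 0).hom := hd10.symm ▸ k.2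
    have hval : (sc.f ψ : ↥(sc.X₂)) = s • ((⟨z, hz⟩ : LinearMap.ker sc.g.hom) : ↥(sc.X₂)) := by
      have h6 := congrArg Subtype.val hψ
      exact h6
    have h2 : Ψ ((Q.complex.d 1 0).hom x) = s • z.hom x :=
      LinearMap.congr_fun (congrArg ModuleCat.Hom.hom ((hscf ψ).symm.trans hval)) x
    have h3 : d10k x = k := Subtype.ext hx
    calc Ψ k = Ψ ((Q.complex.d 1 0).hom x) := by rw [hx]
      _ = s • z.hom x := h2
      _ = s • φ (d10k x) := rfl
      _ = s • φ k := by rw [h3]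
  · rintro ⟨s, hs, hlift⟩
    refine isUSTorsionMod_of_iso e.symm ⟨s, hs, fun h => ?_⟩
    obtain ⟨⟨z, hz⟩, rfl⟩ := Submodule.Quotient.mk_surjective _ h
    change (Submodule.Quotient.mk (s • (⟨z, hz⟩ : LinearMap.ker sc.g.hom)) :
      LinearMap.ker sc.g.hom ⧸ LinearMap.range sc.moduleCatToCycles) = 0
    rw [Submodule.Quotient.mk_eq_zero]
    set zl : Q.complex.X 1 →ₗ[R] M := (show Q.complex.X 1 ⟶ M from z).hom with hzl
    have hker : LinearMap.ker d10k ≤ LinearMap.ker zl := by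
      intro x hxk
      have hx0 : (Q.complex.d 1 0).hom x = 0 := congrArg Subtype.val hxk
      obtain ⟨y, hy⟩ : x ∈ LinearMap.range (Q.complex.d 2 1).hom := by
        rw [hd21]; exact hx0
      have hzg : (sc.g z : Q.complex.X 2 ⟶ M) = 0 := hz
      have h7 := LinearMap.congr_fun (congrArg ModuleCat.Hom.hom ((hscg z).symm.trans hzg)) y
      rw [LinearMap.mem_ker, ← hy]
      exact h7
    set eK := LinearMap.quotKerEquivOfSurjective d10k hd10ksurj with heK
    set φ : (LinearMap.ker π₀ : Submodule R (Q.complex.X 0)) →ₗ[R] M :=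
      ((LinearMap.ker d10k).liftQ zl hker) ∘ₗ (eK.symm : LinearMap.ker π₀ →ₗ[R] _) with hφ
    have hφd : ∀ x : Q.complex.X 1, φ (d10k x) = zl x := by
      intro x
      have h1 : eK.symm (d10k x) = Submodule.Quotient.mk x := by
        rw [LinearEquiv.symm_apply_eq]
        rfl
      show ((LinearMap.ker d10k).liftQ zl hker) (eK.symm (d10k x)) = zl x
      rw [h1]
      rfl
    obtain ⟨ψ, hψ⟩ := hlift φ
    refine ⟨(show ↥(sc.X₁) from (ModuleCat.ofHom ψ : Q.complex.X 0 ⟶ M)), ?_⟩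
    apply Subtype.ext
    show (sc.f (ModuleCat.ofHom ψ : Q.complex.X 0 ⟶ M) : ↥(sc.X₂)) = _
    rw [hscf]
    apply ModuleCat.hom_ext
    apply LinearMap.ext
    intro x
    have h4 : ψ ((d10k x : LinearMap.ker π₀) : Q.complex.X 0) = s • φ (d10k x) := hψ (d10k x)
    show ψ ((Q.complex.d 1 0).hom x) = s • zl x
    rw [← hφd x, ← h4]
    rfl

end Crit

section Main

variable {R : Type u} [CommRing R]

lemma pi_zero_surjective (X : ModuleCat.{u} R) (Q : ProjectiveResolution X) :
    Function.Surjective ((Q.π.f 0).hom : Q.complex.X 0 →ₗ[R] X) := by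
  have h : Epi Q.cokernelCofork.π := Limits.epi_of_isColimit_cofork Q.isColimitCokernelCofork
  have h2 : Epi (Q.π.f 0) := h
  exact (ModuleCat.epi_iff_surjective (Q.π.f 0)).mp h2

lemma proj_X_zero (X : ModuleCat.{u} R) (Q : ProjectiveResolution X) :
    Module.Projective R (Q.complex.X 0) := by
  rw [IsProjective.iff_projective]
  exact Q.projective 0

end Main


/-- in a short exact sequence `0 → A → B → C → 0`, if `A` and `C` are
`u`-`S`-projective, then so is `B`. -/
theorem uS_projective_two_out_of_three
    {R : Type u} [CommRing R] (S : Submonoid R)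
    {A B C : Type u} [AddCommGroup A] [Module R A] [AddCommGroup B] [Module R B]
    [AddCommGroup C] [Module R C]
    (f : A →ₗ[R] B) (g : B →ₗ[R] C)
    (hf : Function.Injective f) (hg : Function.Surjective g)
    (hfg : LinearMap.range f = LinearMap.ker g)
    (hA : IsUSProjective S A) (hC : IsUSProjective S C) :
    IsUSProjective S B := by
  intro M
  obtain ⟨QA⟩ := (HasProjectiveResolution.out (Z := ModuleCat.of R A))
  obtain ⟨QB⟩ := (HasProjectiveResolution.out (Z := ModuleCat.of R B))
  obtain ⟨QC⟩ := (HasProjectiveResolution.out (Z := ModuleCat.of R C))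
  obtain ⟨sA, hsA, hLA⟩ := (ext_one_torsion_iff S (ModuleCat.of R A) M QA).mp (hA M)
  obtain ⟨sC, hsC, hLC⟩ := (ext_one_torsion_iff S (ModuleCat.of R C) M QC).mp (hC M)
  set FA := QA.complex.X 0 with hFA
  set FC := QC.complex.X 0 with hFC
  set πA : FA →ₗ[R] A := ((QA.π.f 0).hom : QA.complex.X 0 →ₗ[R] A) with hπA
  set πC : FC →ₗ[R] C := ((QC.π.f 0).hom : QC.complex.X 0 →ₗ[R] C) with hπC
  have hπAsurj : Function.Surjective πA := pi_zero_surjective (ModuleCat.of R A) QA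
  have hπCsurj : Function.Surjective πC := pi_zero_surjective (ModuleCat.of R C) QC
  have hPA : Module.Projective R FA := proj_X_zero (ModuleCat.of R A) QA
  have hPC : Module.Projective R FC := proj_X_zero (ModuleCat.of R C) QC
  -- lift `πC` along `g`
  obtain ⟨lft, hlft⟩ := Module.projective_lifting_property (R := R) g πC hg
  -- the combined projective cover of `B`
  set πB : (FA × FC) →ₗ[R] B :=
    (f ∘ₗ πA) ∘ₗ (LinearMap.fst R FA FC) + lft ∘ₗ (LinearMap.snd R FA FC) with hπB
  have hπBapp : ∀ p : FA × FC, πB p = f (πA p.1) + lft p.2 := fun p => rfl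
  have hgf : ∀ a : A, g (f a) = 0 := by
    intro a
    have : f a ∈ LinearMap.ker g := hfg ▸ LinearMap.mem_range_self f a
    exact this
  have hπBsurj : Function.Surjective πB := by
    intro b
    obtain ⟨y, hy⟩ := hπCsurj (g b)
    have hmem : b - lft y ∈ LinearMap.ker g := by
      rw [LinearMap.mem_ker, map_sub]
      have : g (lft y) = πC y := LinearMap.congr_fun hlft y
      rw [this, hy, sub_self]
    obtain ⟨a, ha⟩ := hfg.symm ▸ hmem
    obtain ⟨x, hx⟩ := hπAsurj a
    exact ⟨(x, y), by rw [hπBapp]; rw [hx, ha]; abel⟩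
  haveI := hPA; haveI := hPC
  have hPB : Module.Projective R (FA × FC) := inferInstance
  -- the diagram chase : lifting property for `πB` with `sC * sA`
  have chase : USLifts (sC * sA) πB M := by
    intro φ
    -- ker πA includes into ker πB
    have hjmem : ∀ a : LinearMap.ker πA,
        ((LinearMap.inl R FA FC) ((LinearMap.ker πA).subtype a)) ∈ LinearMap.ker πB := by
      intro a
      rw [LinearMap.mem_ker]
      show πB ((a : FA), (0 : FC)) = 0
      rw [hπBapp]
      have h1 : πA (a : FA) = 0 := a.2
      simp [h1]
    set j : LinearMap.ker πA →ₗ[R] LinearMap.ker πB :=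
      LinearMap.codRestrict _ ((LinearMap.inl R FA FC) ∘ₗ (LinearMap.ker πA).subtype) hjmem
      with hj
    obtain ⟨ψA, hψA⟩ := hLA (φ ∘ₗ j)
    -- second components of elements of ker πB lie in ker πC
    have hpCmem : ∀ k : LinearMap.ker πB,
        ((LinearMap.snd R FA FC) ((LinearMap.ker πB).subtype k)) ∈ LinearMap.ker πC := by
      intro k
      rw [LinearMap.mem_ker]
      have h1 : πB (k : FA × FC) = 0 := k.2
      rw [hπBapp] at h1
      have h2 := congrArg g h1
      rw [map_add, map_zero, hgf] at h2
      have h3 : g (lft (k : FA × FC).2) = πC (k : FA × FC).2 := LinearMap.congr_fun hlft _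
      rw [h3, zero_add] at h2
      exact h2
    set pC : LinearMap.ker πB →ₗ[R] LinearMap.ker πC :=
      LinearMap.codRestrict _ ((LinearMap.snd R FA FC) ∘ₗ (LinearMap.ker πB).subtype) hpCmem
      with hpC
    set θ : LinearMap.ker πB →ₗ[R] M :=
      sA • φ - ψA ∘ₗ ((LinearMap.fst R FA FC) ∘ₗ (LinearMap.ker πB).subtype) with hθ
    have hθapp : ∀ k : LinearMap.ker πB, θ k = sA • φ k - ψA (k : FA × FC).1 := fun k => rfl
    have hkerpC : LinearMap.ker pC ≤ LinearMap.ker θ := by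
      intro k hk
      have hy0 : (k : FA × FC).2 = 0 := congrArg Subtype.val hk
      have h1 : πB (k : FA × FC) = 0 := k.2
      rw [hπBapp, hy0, map_zero, add_zero] at h1
      have hx : πA (k : FA × FC).1 = 0 := by
        apply hf
        rw [h1, map_zero]
      have hkj : j ⟨(k : FA × FC).1, hx⟩ = k := by
        apply Subtype.ext
        show ((k : FA × FC).1, (0 : FC)) = (k : FA × FC)
        rw [← hy0]
      rw [LinearMap.mem_ker, hθapp]
      have h2 : ψA (k : FA × FC).1 = sA • (φ ∘ₗ j) ⟨(k : FA × FC).1, hx⟩ :=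
        hψA ⟨(k : FA × FC).1, hx⟩
      rw [h2]
      show sA • φ k - sA • φ (j ⟨(k : FA × FC).1, hx⟩) = 0
      rw [hkj, sub_self]
    have hpCsurj : Function.Surjective pC := by
      rintro ⟨c, hc⟩
      have h1 : g (lft c) = 0 := by
        have : g (lft c) = πC c := LinearMap.congr_fun hlft c
        rw [this]; exact hc
      have hm2 : lft c ∈ LinearMap.ker g := h1
      rw [← hfg] at hm2
      obtain ⟨a, ha⟩ := hm2
      obtain ⟨x, hx⟩ := hπAsurj a
      have hmem : ((-x, c) : FA × FC) ∈ LinearMap.ker πB := by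
        rw [LinearMap.mem_ker, hπBapp]
        show f (πA (-x)) + lft c = 0
        rw [map_neg, map_neg, hx, ha]
        abel
      exact ⟨⟨(-x, c), hmem⟩, rfl⟩
    set eC := LinearMap.quotKerEquivOfSurjective pC hpCsurj with heC
    set φC : LinearMap.ker πC →ₗ[R] M :=
      ((LinearMap.ker pC).liftQ θ hkerpC) ∘ₗ (eC.symm : LinearMap.ker πC →ₗ[R] _) with hφC
    have hφCd : ∀ k : LinearMap.ker πB, φC (pC k) = θ k := by
      intro k
      have h1 : eC.symm (pC k) = Submodule.Quotient.mk k := by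
        rw [LinearEquiv.symm_apply_eq]
        rfl
      show ((LinearMap.ker pC).liftQ θ hkerpC) (eC.symm (pC k)) = θ k
      rw [h1]
      rfl
    obtain ⟨ψC, hψC⟩ := hLC φC
    refine ⟨sC • (ψA ∘ₗ (LinearMap.fst R FA FC)) + ψC ∘ₗ (LinearMap.snd R FA FC),
      fun k => ?_⟩
    have h1 : ψC ((pC k : LinearMap.ker πC) : FC) = sC • φC (pC k) := hψC (pC k)
    have h2 : ((pC k : LinearMap.ker πC) : FC) = (k : FA × FC).2 := rfl
    calc (sC • (ψA ∘ₗ (LinearMap.fst R FA FC)) + ψC ∘ₗ (LinearMap.snd R FA FC)) (k : FA × FC)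
        = sC • ψA (k : FA × FC).1 + ψC (k : FA × FC).2 := rfl
      _ = sC • ψA (k : FA × FC).1 + sC • φC (pC k) := by rw [← h2, h1]
      _ = sC • ψA (k : FA × FC).1 + sC • (sA • φ k - ψA (k : FA × FC).1) := by
          rw [hφCd, hθapp]
      _ = sC • (sA • φ k) := by rw [smul_sub]; abel
      _ = (sC * sA) • φ k := by rw [mul_smul]
  -- transfer to the resolution of `B` and conclude
  have hPB0 : Module.Projective R (QB.complex.X 0) := proj_X_zero (ModuleCat.of R B) QB
  have hπB0surj : Function.Surjective ((QB.π.f 0).hom : QB.complex.X 0 →ₗ[R] B) :=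
    pi_zero_surjective (ModuleCat.of R B) QB
  have hLB : USLifts (sC * sA) ((QB.π.f 0).hom : QB.complex.X 0 →ₗ[R] B) M :=
    usLifts_transfer πB ((QB.π.f 0).hom : QB.complex.X 0 →ₗ[R] B) hPB hPB0 hπBsurj hπB0surj chase
  exact (ext_one_torsion_iff S (ModuleCat.of R B) M QB).mpr
    ⟨sC * sA, S.mul_mem hsC hsA, hLB⟩
end

section
/- Let 0 → A →f B →g C → 0 be a u-S-split short exact sequence of R-modules. If B is u-S-projective, then both A and C are u-S-projective. -/
open CategoryTheory

universe u

namespace USAux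

variable {R : Type*} [Ring R]

section OpLinear
variable {C : Type*} [Category C] [Preadditive C] [Linear R C]

/-- Module structure on morphisms in the opposite category. -/
def opHomModule (X Y : Cᵒᵖ) : Module R (X ⟶ Y) where
  smul s f := (s • f.unop).op
  one_smul f := Quiver.Hom.unop_inj (one_smul _ _)
  mul_smul s t f := Quiver.Hom.unop_inj (mul_smul s t f.unop)
  smul_zero s := Quiver.Hom.unop_inj (smul_zero s)
  smul_add s f g := Quiver.Hom.unop_inj (smul_add s f.unop g.unop)
  add_smul s t f := Quiver.Hom.unop_inj (add_smul s t f.unop)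
  zero_smul f := Quiver.Hom.unop_inj (zero_smul R f.unop)

instance opLinear : Linear R Cᵒᵖ where
  homModule X Y := opHomModule X Y
  smul_comp X Y Z r f g := Quiver.Hom.unop_inj (Linear.comp_smul _ _ _ g.unop r f.unop)
  comp_smul X Y Z f r g := Quiver.Hom.unop_inj (Linear.smul_comp _ _ _ r g.unop f.unop)

@[simp] lemma unop_smul {X Y : Cᵒᵖ} (s : R) (f : X ⟶ Y) : (s • f).unop = s • f.unop := rfl
@[simp] lemma op_smul {X Y : C} (s : R) (f : X ⟶ Y) : (s • f).op = s • f.op := rfl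

instance rightOpLinear {D : Type*} [Category D] [Preadditive D] [Linear R D]
    (F : Cᵒᵖ ⥤ D) [F.Additive] [Functor.Linear R F] : Functor.Linear R F.rightOp where
  map_smul {X Y} f r := by
    apply Quiver.Hom.unop_inj
    show F.map (r • f).op = r • F.map f.op
    rw [op_smul, F.map_smul]

end OpLinear

section Yoneda
variable {R' : Type*} [CommRing R'] {C : Type*} [Category C] [Preadditive C] [Linear R' C]

instance linearYonedaObjLinear (X : C) : Functor.Linear R' ((linearYoneda R' C).obj X) where
  map_smul {Y Z} f r := by
    ext u
    exact Linear.smul_comp _ _ _ r f.unop u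

end Yoneda


section Homology
variable {C : Type*} [Category C] [Abelian C] [Linear R C] {ι : Type*} {c : ComplexShape ι}

lemma homologyMap_smul {K L : HomologicalComplex C c} (φ : K ⟶ L) (s : R) (i : ι) :
    HomologicalComplex.homologyMap (s • φ) i = s • HomologicalComplex.homologyMap φ i := by
  have h : (HomologicalComplex.shortComplexFunctor C c i).map (s • φ) =
      s • (HomologicalComplex.shortComplexFunctor C c i).map φ := by
    ext <;> simp <;> rfl
  unfold HomologicalComplex.homologyMap
  rw [h, ShortComplex.homologyMap_smul]
  rfl

lemma homologyFunctor_map_smul_id {K : HomologicalComplex C c} (s : R) (i : ι) :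
    (HomotopyCategory.homologyFunctor C c i).map
      (s • 𝟙 ((HomotopyCategory.quotient C c).obj K)) =
      s • 𝟙 ((HomotopyCategory.homologyFunctor C c i).obj
        ((HomotopyCategory.quotient C c).obj K)) := by
  have h1 : (s • 𝟙 ((HomotopyCategory.quotient C c).obj K)) =
      (HomotopyCategory.quotient C c).map (s • 𝟙 K) := by
    rw [Functor.map_smul, CategoryTheory.Functor.map_id]
  rw [h1]
  have h2 := (HomotopyCategory.homologyFunctorFactors C c i).hom.naturality (s • 𝟙 K)
  have h3 : (HomologicalComplex.homologyFunctor C c i).map (s • 𝟙 K) =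
      s • 𝟙 ((HomologicalComplex.homologyFunctor C c i).obj K) := by
    show HomologicalComplex.homologyMap (s • 𝟙 K) i = _
    rw [homologyMap_smul, HomologicalComplex.homologyMap_id]
    rfl
  rw [h3] at h2
  dsimp at h2 ⊢
  have e := (HomotopyCategory.homologyFunctorFactors C c i).hom.app K
  -- h2 : hF.map (q.map (s•𝟙K)) ≫ app = app ≫ (s • 𝟙)
  have : IsIso ((HomotopyCategory.homologyFunctorFactors C c i).hom.app K) := inferInstance
  rw [← cancel_mono ((HomotopyCategory.homologyFunctorFactors C c i).hom.app K)]
  rw [h2, Linear.comp_smul, Linear.smul_comp, Category.comp_id, Category.id_comp]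

end Homology


section Derived
variable {C : Type*} [Category C] [Abelian C] [Linear R C] [EnoughProjectives C]

lemma projRes_map_smul_id (s : R) (X : C) :
    (projectiveResolutions C).map (s • 𝟙 X) = s • 𝟙 ((projectiveResolutions C).obj X) := by
  let P := projectiveResolution X
  have comm : (s • 𝟙 P.complex).f 0 ≫ P.π.f 0 = P.π.f 0 ≫ (s • 𝟙 X) := by
    simp
    erw [Linear.smul_comp, Category.id_comp, Linear.comp_smul, Category.comp_id]
  have h := ProjectiveResolution.iso_inv_naturality (s • 𝟙 X) P P (s • 𝟙 P.complex) comm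
  have hq : (HomotopyCategory.quotient C (ComplexShape.down ℕ)).map (s • 𝟙 P.complex) =
      s • 𝟙 ((HomotopyCategory.quotient C (ComplexShape.down ℕ)).obj P.complex) := by
    rw [Functor.map_smul, CategoryTheory.Functor.map_id]
  rw [hq] at h
  calc (projectiveResolutions C).map (s • 𝟙 X)
      = P.iso.hom ≫ (P.iso.inv ≫ (projectiveResolutions C).map (s • 𝟙 X)) := by
        rw [Iso.hom_inv_id_assoc]
    _ = P.iso.hom ≫ ((s • 𝟙 _) ≫ P.iso.inv) := by rw [h]
    _ = s • 𝟙 _ := by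
        rw [Linear.smul_comp, Category.id_comp, Linear.comp_smul, Iso.hom_inv_id]

variable {D : Type*} [Category D] [Abelian D] [Linear R D]

lemma leftDerived_map_smul_id (F : C ⥤ D) [F.Additive] [Functor.Linear R F]
    (s : R) (X : C) (n : ℕ) :
    (F.leftDerived n).map (s • 𝟙 X) = s • 𝟙 ((F.leftDerived n).obj X) := by
  show (HomotopyCategory.homologyFunctor D _ n).map
      ((F.mapHomotopyCategory _).map ((projectiveResolutions C).map (s • 𝟙 X))) = _
  rw [projRes_map_smul_id]
  have h1 : (s • 𝟙 ((projectiveResolutions C).obj X)) =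
      (HomotopyCategory.quotient C (ComplexShape.down ℕ)).map
        (s • 𝟙 (projectiveResolution X).complex) := by
    rw [Functor.map_smul, CategoryTheory.Functor.map_id]; rfl
  rw [h1]
  erw [Functor.mapHomotopyCategory_map]
  have h2 : (F.mapHomologicalComplex (ComplexShape.down ℕ)).map
      (s • 𝟙 (projectiveResolution X).complex) =
      s • 𝟙 ((F.mapHomologicalComplex (ComplexShape.down ℕ)).obj
        (projectiveResolution X).complex) := by
    rw [Functor.map_smul, CategoryTheory.Functor.map_id]
  rw [h2]
  have h3 : (HomotopyCategory.quotient D (ComplexShape.down ℕ)).map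
      (s • 𝟙 ((F.mapHomologicalComplex (ComplexShape.down ℕ)).obj
        (projectiveResolution X).complex)) =
      s • 𝟙 ((HomotopyCategory.quotient D (ComplexShape.down ℕ)).obj
        ((F.mapHomologicalComplex (ComplexShape.down ℕ)).obj
          (projectiveResolution X).complex)) := by
    rw [Functor.map_smul, CategoryTheory.Functor.map_id]
  rw [h3]
  erw [homologyFunctor_map_smul_id]
  rfl

end Derived

section ExtLemma
variable {R' : Type u} [CommRing R']

lemma Ext_map_smul_id (s : R') (X M : ModuleCat.{u} R') (n : ℕ) :
    ((Ext R' (ModuleCat.{u} R') n).map (s • 𝟙 X).op).app M =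
      s • 𝟙 (((Ext R' (ModuleCat.{u} R') n).obj (Opposite.op X)).obj M) := by
  show ((((linearYoneda R' (ModuleCat.{u} R')).obj M).rightOp.leftDerived n).map (s • 𝟙 X)).unop = _
  rw [leftDerived_map_smul_id]
  rfl

end ExtLemma


section Final
variable {R' : Type u} [CommRing R']

lemma torsion_of_retract (S : Submonoid R') {s : R'} (hs : s ∈ S)
    {X Y : ModuleCat.{u} R'} (i : X ⟶ Y) (r : Y ⟶ X)
    (hir : i ≫ r = s • 𝟙 X) (M : ModuleCat.{u} R')
    (hY : IsUSTorsionMod S (ext R' 1 Y M)) : IsUSTorsionMod S (ext R' 1 X M) := by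
  obtain ⟨t, htS, ht⟩ := hY
  refine ⟨t * s, S.mul_mem htS hs, fun x => ?_⟩
  have h2 : (s • 𝟙 X).op = r.op ≫ i.op := by rw [← hir, op_comp]
  change ((Ext R' (ModuleCat.{u} R') 1).obj (Opposite.op X)).obj M at x
  have h3 : s • x =
      ((Ext R' (ModuleCat.{u} R') 1).map i.op).app M
        (((Ext R' (ModuleCat.{u} R') 1).map r.op).app M x) := by
    calc s • x = (s • 𝟙 (((Ext R' (ModuleCat.{u} R') 1).obj (Opposite.op X)).obj M)) x := rfl
      _ = (((Ext R' (ModuleCat.{u} R') 1).map (s • 𝟙 X).op).app M) x := by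
          rw [Ext_map_smul_id]
      _ = (((Ext R' (ModuleCat.{u} R') 1).map (r.op ≫ i.op)).app M) x := by rw [h2]
      _ = _ := by rw [Functor.map_comp]; rfl
  have hz := ht (((Ext R' (ModuleCat.{u} R') 1).map r.op).app M x)
  calc (t * s) • x = t • (s • x) := mul_smul t s x
    _ = t • (((Ext R' (ModuleCat.{u} R') 1).map i.op).app M
        (((Ext R' (ModuleCat.{u} R') 1).map r.op).app M x)) := by rw [← h3]
    _ = ((Ext R' (ModuleCat.{u} R') 1).map i.op).app M
        (t • (((Ext R' (ModuleCat.{u} R') 1).map r.op).app M x)) := by rw [map_smul]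
    _ = 0 := by erw [hz, map_zero]

end Final

end USAux


/-- in a `u`-`S`-split short exact sequence `0 → A → B → C → 0`, if
`B` is `u`-`S`-projective then so are `A` and `C`. -/
theorem uS_projective_of_uS_split
    {R : Type u} [CommRing R] (S : Submonoid R)
    {A B C : Type u} [AddCommGroup A] [Module R A] [AddCommGroup B] [Module R B]
    [AddCommGroup C] [Module R C]
    (f : A →ₗ[R] B) (g : B →ₗ[R] C)
    (hf : Function.Injective f) (hg : Function.Surjective g)
    (hfg : LinearMap.range f = LinearMap.ker g)
    (hsplit : ∃ s ∈ S, ∃ f' : B →ₗ[R] A, ∀ a : A, f' (f a) = s • a)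
    (hB : IsUSProjective S B) :
    IsUSProjective S A ∧ IsUSProjective S C := by
  obtain ⟨s, hsS, f', hf'⟩ := hsplit
  constructor
  · intro M
    refine USAux.torsion_of_retract S hsS (ModuleCat.ofHom f) (ModuleCat.ofHom f') ?_ M (hB M)
    ext a
    show f' (f a) = s • a
    exact hf' a
  · -- construct a section up to s
    have hgf : ∀ a : A, g (f a) = 0 := by
      intro a
      have : f a ∈ LinearMap.ker g := by
        rw [← hfg]; exact LinearMap.mem_range_self f a
      exact this
    set h : B →ₗ[R] B := s • LinearMap.id - f.comp f' with hh
    have hker : LinearMap.ker g ≤ LinearMap.ker h := by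
      intro b hb
      have hbr : b ∈ LinearMap.range f := by rw [hfg]; exact hb
      obtain ⟨a, rfl⟩ := hbr
      have : h (f a) = s • f a - f (f' (f a)) := rfl
      rw [LinearMap.mem_ker, this, hf' a, map_smul, sub_self]
    let e := g.quotKerEquivOfSurjective hg
    let q : C →ₗ[R] B :=
      ((LinearMap.ker g).liftQ h hker).comp (e.symm : C →ₗ[R] B ⧸ LinearMap.ker g)
    have hq : ∀ x : C, g (q x) = s • x := by
      intro x
      obtain ⟨b, rfl⟩ := hg x
      have he : e.symm (g b) = Submodule.Quotient.mk b := by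
        apply e.injective
        rw [LinearEquiv.apply_symm_apply]
        simp [e, LinearMap.quotKerEquivOfSurjective, LinearMap.quotKerEquivRange]
      have : q (g b) = h b := by
        show ((LinearMap.ker g).liftQ h hker) (e.symm (g b)) = h b
        rw [he, Submodule.liftQ_apply]
      rw [this]
      have : g (h b) = s • g b - g (f (f' b)) := by
        simp [hh, map_sub, map_smul]
      rw [this, hgf, sub_zero]
    intro M
    refine USAux.torsion_of_retract S hsS (ModuleCat.ofHom q) (ModuleCat.ofHom g) ?_ M (hB M)
    ext x
    show g (q x) = s • x
    exact hq x
end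

section
/- Let R be a commutative ring and P an R-module. Then P is projective if and only if P is u-(R∖𝔪)-projective for every maximal ideal 𝔪 of R. -/
open CategoryTheory

universe u

section Aux

open CategoryTheory Limits

variable {R : Type u} [CommRing R]

lemma aux_projective_of_ext (X : ModuleCat.{u} R)
    (h : ∀ M : ModuleCat.{u} R, Subsingleton (ext R 1 X M)) : Projective X := by
  obtain ⟨Pr⟩ := (HasProjectiveResolution.out (Z := X))
  set e : Pr.complex.X 0 ⟶ X := Pr.π.f 0 with he
  set K : ModuleCat.{u} R := kernel e with hK
  set ι : K ⟶ Pr.complex.X 0 := kernel.ι e with hι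
  have hd : Pr.complex.d 1 0 ≫ e = 0 := Pr.complex_d_comp_π_f_zero
  set φ : Pr.complex.X 1 ⟶ K := kernel.lift e (Pr.complex.d 1 0) hd with hφ
  have hφι : φ ≫ ι = Pr.complex.d 1 0 := kernel.lift_ι e _ hd
  -- homology at 1 of the Hom complex vanishes
  have hsub : Subsingleton ((Pr.complex.linearYonedaObj R K).homology 1) := by
    exact ⟨fun a b =>
      (((forget (ModuleCat.{u} R)).mapIso (Pr.isoExt 1 K)).toEquiv).symm.injective
        ((h K).elim _ _)⟩
  have hZ : IsZero ((Pr.complex.linearYonedaObj R K).homology 1) :=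
    ModuleCat.isZero_of_subsingleton _
  have hex : (Pr.complex.linearYonedaObj R K).ExactAt 1 :=
    (HomologicalComplex.exactAt_iff_isZero_homology _ _).2 hZ
  rw [HomologicalComplex.exactAt_iff' _ 0 1 2 (by simp) (by simp),
    ShortComplex.moduleCat_exact_iff] at hex
  obtain ⟨ψ, hψ⟩ := hex φ (by
    show (Pr.complex.linearYonedaObj R K).d 1 2 φ = 0
    simp [ChainComplex.linearYonedaObj_d]
    change Pr.complex.d 2 1 ≫ φ = 0
    rw [← cancel_mono ι]
    simp [hφι])
  change Pr.complex.X 0 ⟶ K at ψ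
  have hψ' : Pr.complex.d 1 0 ≫ ψ = φ := by
    exact hψ
  have hcond : Pr.complex.d 1 0 ≫ (𝟙 (Pr.complex.X 0) - ψ ≫ ι) = 0 := by
    rw [Preadditive.comp_sub, Category.comp_id, ← Category.assoc, hψ', hφι, sub_self]
  set t : X ⟶ Pr.complex.X 0 :=
    Cofork.IsColimit.desc Pr.isColimitCokernelCofork (𝟙 (Pr.complex.X 0) - ψ ≫ ι)
      (by simpa using hcond) with ht
  have het : e ≫ t = 𝟙 (Pr.complex.X 0) - ψ ≫ ι := by
    exact Cofork.IsColimit.π_desc Pr.isColimitCokernelCofork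
  have hte : t ≫ e = 𝟙 X := by
    haveI : Epi e := inferInstanceAs (Epi (Pr.π.f 0))
    rw [← cancel_epi e, ← Category.assoc, het]
    have hιe : ι ≫ e = 0 := kernel.condition e
    simp [Preadditive.sub_comp, Category.assoc, hιe]
  constructor
  intro E Y f g hg
  refine ⟨t ≫ Projective.factorThru (e ≫ f) g, ?_⟩
  rw [Category.assoc, Projective.factorThru_comp, ← Category.assoc, hte, Category.id_comp]

end Aux

/-- `P` is projective iff `P` is `u`-`(R∖𝔪)`-projective for every
maximal ideal `𝔪`. -/
theorem projective_iff_u_m_projective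
    {R : Type u} [CommRing R] (P : Type u) [AddCommGroup P] [Module R P] :
    Module.Projective R P ↔
      ∀ (𝔪 : Ideal R) (h𝔪 : 𝔪.IsMaximal),
        IsUSProjective (@Ideal.primeCompl R _ 𝔪 h𝔪.isPrime) P := by
  constructor
  · intro hP 𝔪 h𝔪 M
    haveI : Projective (ModuleCat.of R P) := (IsProjective.iff_projective.{u, u} P).1 hP
    have hz : Limits.IsZero (ext R 1 (ModuleCat.of R P) M) :=
      isZero_Ext_succ_of_projective (ModuleCat.of R P) M 0
    refine ⟨1, 𝔪.primeCompl.one_mem, fun x => ?_⟩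
    have h1 : 𝟙 (ext R 1 (ModuleCat.of R P) M) = 0 := hz.eq_of_src _ _
    have hx : x = (0 : ext R 1 (ModuleCat.of R P) M ⟶ ext R 1 (ModuleCat.of R P) M) x := by
      rw [← h1]; rfl
    have : x = 0 := by simpa using hx
    rw [this, smul_zero]
  · intro h
    have hsub : ∀ M : ModuleCat.{u} R, Subsingleton (ext R 1 (ModuleCat.of R P) M) := by
      intro M
      set N := ext R 1 (ModuleCat.of R P) M with hN
      have hann : Module.annihilator R N = ⊤ := by
        by_contra hne
        obtain ⟨𝔪, hmax, hle⟩ := Ideal.exists_le_maximal _ hne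
        obtain ⟨s, hs, hsk⟩ := h 𝔪 hmax M
        exact hs (hle (Module.mem_annihilator.2 hsk))
      have h1 : (1 : R) ∈ Module.annihilator R N := by rw [hann]; trivial
      have hz := Module.mem_annihilator.1 h1
      refine ⟨fun a b => ?_⟩
      have ha : a = 0 := by rw [← one_smul R a, hz]
      have hb : b = 0 := by rw [← one_smul R b, hz]
      rw [ha, hb]
    exact (IsProjective.iff_projective.{u, u} P).2
      (aux_projective_of_ext (ModuleCat.of R P) hsub)
end

section
/- Let R be a commutative ring, S a multiplicative subset, and M an R-module. Then M is u-S-semisimple (every u-S-short exact sequence with middle term M is u-S-split) if and only if every (ordinary) short exact sequence 0 → L → M → N → 0 is u-S-split. -/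
universe u

/-- `M` is `u`-`S`-semisimple (every `u`-`S`-short exact sequence with
middle term `M` is `u`-`S`-split) iff every ordinary short exact sequence
`0 → L → M → N → 0` is `u`-`S`-split. -/
theorem uS_semisimple_iff_ordinary_sequences_split
    {R : Type u} [CommRing R] (S : Submonoid R)
    (M : Type u) [AddCommGroup M] [Module R M] :
    (∀ (A C : Type u) [AddCommGroup A] [Module R A] [AddCommGroup C] [Module R C]
      (f : A →ₗ[R] M) (g : M →ₗ[R] C), IsUSShortExact S f g →
      ∃ s ∈ S, ∃ f' : M →ₗ[R] A, ∀ a : A, f' (f a) = s • a) ↔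
    (∀ (L N : Type u) [AddCommGroup L] [Module R L] [AddCommGroup N] [Module R N]
      (f : L →ₗ[R] M) (g : M →ₗ[R] N),
      Function.Injective f → Function.Surjective g →
      LinearMap.range f = LinearMap.ker g →
      ∃ s ∈ S, ∃ f' : M →ₗ[R] L, ∀ a : L, f' (f a) = s • a) := by
  constructor
  · intro H L N _ _ _ _ f g hinj hsurj hrange
    apply H L N f g
    refine ⟨⟨1, S.one_mem, ?_⟩, ⟨1, S.one_mem, ?_, ?_⟩, ⟨1, S.one_mem, ?_⟩⟩
    · intro x hx
      rw [LinearMap.mem_ker] at hx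
      have : x = 0 := hinj (by simpa using hx)
      simp [this]
    · intro x hx
      rw [one_smul, hrange]; exact hx
    · intro x hx
      rw [one_smul, ← hrange]; exact hx
    · intro y
      rw [one_smul]
      exact (hsurj y).imp (fun x h => h)
  · intro H A C _ _ _ _ f g hse
    obtain ⟨⟨s₁, hs₁S, hs₁⟩, ⟨s₂, hs₂S, hker, hrg⟩, _⟩ := hse
    obtain ⟨t, htS, f', hf'⟩ := H (↥(LinearMap.ker g)) (M ⧸ LinearMap.ker g)
      (LinearMap.ker g).subtype (LinearMap.ker g).mkQ
      (Submodule.injective_subtype _) (Submodule.mkQ_surjective _)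
      (by rw [Submodule.range_subtype, Submodule.ker_mkQ])
    have key : ∀ a b : A, f a = f b → s₁ • a = s₁ • b := by
      intro a b hab
      have h1 : a - b ∈ LinearMap.ker f := by
        rw [LinearMap.mem_ker, map_sub, hab, sub_self]
      have h2 := hs₁ _ h1
      rw [smul_sub, sub_eq_zero] at h2
      exact h2
    choose sec hsec using fun (x : ↥(LinearMap.ker g)) => hker (x : M) x.2
    have hseceq : ∀ x : ↥(LinearMap.ker g), f (sec x) = s₂ • (x : M) := by
      intro x
      exact (hsec x)
    let φ : ↥(LinearMap.ker g) →ₗ[R] A :=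
      { toFun := fun x => s₁ • sec x
        map_add' := fun x y => by
          have h := key (sec (x + y)) (sec x + sec y) (by
            rw [map_add, hseceq, hseceq, hseceq, Submodule.coe_add, smul_add])
          simpa [smul_add] using h
        map_smul' := fun r x => by
          have h := key (sec (r • x)) (r • sec x) (by
            rw [map_smul, hseceq, hseceq, Submodule.coe_smul, smul_comm])
          show s₁ • sec (r • x) = r • (s₁ • sec x)
          rw [h, smul_comm] }
    refine ⟨t * (s₁ * (s₂ * s₂)), mul_mem htS (mul_mem hs₁S (mul_mem hs₂S hs₂S)),
      φ.comp (f'.comp (s₂ • LinearMap.id)), ?_⟩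
    intro a
    have hmem : s₂ • f a ∈ LinearMap.ker g := hrg (f a) ⟨a, rfl⟩
    have h1 : f' (s₂ • f a) = t • (⟨s₂ • f a, hmem⟩ : ↥(LinearMap.ker g)) :=
      hf' ⟨s₂ • f a, hmem⟩
    have h2 : s₁ • sec (⟨s₂ • f a, hmem⟩ : ↥(LinearMap.ker g)) = s₁ • ((s₂ * s₂) • a) := by
      apply key
      rw [hseceq, map_smul]
      simp [mul_smul]
    simp only [LinearMap.comp_apply, LinearMap.smul_apply, LinearMap.id_apply, h1, map_smul, φ,
      LinearMap.coe_mk, AddHom.coe_mk]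
    rw [h2]
    rw [← mul_smul, ← mul_smul, mul_assoc]
end

section
/- Let R be a commutative ring and S a multiplicative subset consisting of non-zero-divisors. If R is u-S-semisimple, then R is semisimple. Consequently, for regular S, R is u-S-semisimple if and only if R is semisimple. -/
universe u

/-- `R` is a `u`-`S`-semisimple ring: there is a uniform `s ∈ S` such that every ideal
`I` admits `f : R → I` with `f(i) = s·i` for all `i ∈ I`. -/
def IsUSSemisimpleRing {R : Type u} [CommRing R] (S : Submonoid R) : Prop :=
  ∃ s ∈ S, ∀ I : Ideal R, ∃ f : R →ₗ[R] I, ∀ i ∈ I, ((f i : R)) = s * i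

/-- if `S` consists of non-zero-divisors, then `R` is `u`-`S`-semisimple
iff `R` is semisimple. -/
theorem uS_semisimple_ring_iff_semisimple_of_regular
    {R : Type u} [CommRing R] (S : Submonoid R)
    (hreg : (S : Set R) ⊆ (nonZeroDivisors R : Set R)) :
    IsUSSemisimpleRing S ↔ IsSemisimpleRing R := by
  constructor
  · rintro ⟨s, hsS, h⟩
    have hs : s ∈ nonZeroDivisors R := hreg hsS
    -- For each ideal I, produce x ∈ I with i * x = s * i for all i ∈ I.
    have key : ∀ I : Ideal R, ∃ x ∈ I, ∀ i ∈ I, i * x = s * i := by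
      intro I
      obtain ⟨f, hf⟩ := h I
      refine ⟨(f 1 : R), (f 1).2, fun i hi => ?_⟩
      have h1 : f i = i • f 1 := by
        rw [← f.map_smul, smul_eq_mul, mul_one]
      have h2 := hf i hi
      rw [h1] at h2
      simpa [smul_eq_mul] using h2
    -- Step 1: s is a unit, with inverse c.
    obtain ⟨x, hxmem, hx⟩ := key (Ideal.span {s * s})
    have hss : s * s ∈ Ideal.span ({s * s} : Set R) := Ideal.subset_span rfl
    obtain ⟨c, hc⟩ := Ideal.mem_span_singleton'.mp hxmem
    have hxs : x = s := by
      have h1 := hx (s * s) hss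
      have hss' : s * s ∈ nonZeroDivisors R := mul_mem hs hs
      have h1' : s * s * x = s * s * s := by rw [h1]; ring
      exact (mul_cancel_left_mem_nonZeroDivisors hss').mp h1'
    have hcs : c * s = 1 := by
      have h1 : s * (c * s) = s * 1 := by
        have hcc : c * (s * s) = s := by rw [hc, hxs]
        rw [mul_one]
        calc s * (c * s) = c * (s * s) := by ring
          _ = s := hcc
      exact (mul_cancel_left_mem_nonZeroDivisors hs).mp h1
    -- Step 2: every ideal is complemented.
    refine (isSemisimpleModule_iff ..).mpr ⟨?_⟩
    intro I
    obtain ⟨y, hymem, hy⟩ := key I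
    set e : R := c * y with he
    have heI : e ∈ I := by simpa [he, smul_eq_mul] using I.smul_mem c hymem
    have hfix : ∀ i ∈ I, i * e = i := by
      intro i hi
      calc i * (c * y) = c * (i * y) := by ring
        _ = c * (s * i) := by rw [hy i hi]
        _ = (c * s) * i := by ring
        _ = i := by rw [hcs, one_mul]
    refine ⟨Ideal.span {1 - e}, ?_, ?_⟩
    · -- disjoint
      rw [Submodule.disjoint_def]
      intro z hzI hzJ
      obtain ⟨t, ht⟩ := Ideal.mem_span_singleton'.mp hzJ
      have hee : e * e = e := hfix e heI
      have : z * e = 0 := by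
        calc z * e = t * (1 - e) * e := by rw [ht]
          _ = t * (e - e * e) := by ring
          _ = t * (e - e) := by rw [hee]
          _ = 0 := by ring
      rw [← hfix z hzI, this]
    · -- codisjoint
      rw [codisjoint_iff, eq_top_iff]
      intro z _
      have : z = z * e + z * (1 - e) := by ring
      rw [this]
      exact Submodule.add_mem _ (Submodule.mem_sup_left (by simpa [smul_eq_mul] using I.smul_mem z heI))
        (Submodule.mem_sup_right (Ideal.mem_span_singleton'.mpr ⟨z, rfl⟩))
  · intro hS
    refine ⟨1, S.one_mem, fun I => ?_⟩
    obtain ⟨J, hJ⟩ := exists_isCompl I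
    refine ⟨I.projectionOnto J hJ, fun i hi => ?_⟩
    rw [one_mul]
    have := Submodule.projectionOnto_apply_left hJ ⟨i, hi⟩
    exact congrArg Subtype.val this
end
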